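/- arXiv:0905.3424 — 4 statements merged into one kernel-verified Lean document; each statement's English description precedes it below -/
import Mathlib

section
/- Let a : ℝ → ℝ be an increasing function on [S, S+D] with D > 0, let h : (0,∞) → (1,∞) be an increasing function with ∫₁^∞ (y · h(y)^{1/n})^{-1} dy < ∞, and let A > 0, n ≥ 1. Suppose that for all S ≤ s ≤ s+t ≤ S+D one has t^n · a(s) ≤ A · a(s+t) / h(a(s+t)^{-1/n}), and a(s) > 0 on [S, S+D]. Then there exists a constant C > 0 depending only on A, D, h, n (independent of S and of a) such that a(S+D) ≥ C. -/
open Set MeasureTheory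

set_option maxHeartbeats 2000000 in
/-- Kołodziej-type iteration lemma (Lemma 2.1 of the paper): if `a` is an increasing
positive function on `[S, S+D]` satisfying `t^n · a(s) ≤ A · a(s+t) / h(a(s+t)^{-1/n})`
for all `S ≤ s ≤ s+t ≤ S+D`, where `h : (0,∞) → (1,∞)` is increasing with
`∫₁^∞ (y·h(y)^{1/n})⁻¹ dy < ∞`, then `a(S+D)` is bounded below by a constant
depending only on `A`, `D`, `h`, `n` (independent of `S` and `a`). -/
theorem stmt0 (n : ℕ) (hn : 1 ≤ n) (A D : ℝ) (hA : 0 < A) (hD : 0 < D)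
    (h : ℝ → ℝ) (hmono : MonotoneOn h (Ioi (0 : ℝ)))
    (hrange : ∀ y : ℝ, 0 < y → 1 < h y)
    (hint : IntegrableOn (fun y : ℝ => (y * (h y) ^ ((1 : ℝ) / n))⁻¹) (Ioi (1 : ℝ))) :
    ∃ C : ℝ, 0 < C ∧ ∀ (S : ℝ) (a : ℝ → ℝ),
      MonotoneOn a (Icc S (S + D)) →
      (∀ x ∈ Icc S (S + D), 0 < a x) →
      (∀ s t : ℝ, S ≤ s → 0 ≤ t → s + t ≤ S + D →
        t ^ n * a s ≤ A * a (s + t) / h ((a (s + t)) ^ (-(1 : ℝ) / n))) →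
      C ≤ a (S + D) := by
  set g : ℝ → ℝ := fun y => (y * (h y) ^ ((1 : ℝ) / n))⁻¹ with hgdef
  clear_value g
  have npos : (0:ℝ) < (n:ℝ) := by exact_mod_cast hn.trans_lt' (by norm_num)
  have hn0 : (n:ℝ) ≠ 0 := ne_of_gt npos
  -- nonnegativity of g on Ioi 1
  have gnonneg : ∀ y : ℝ, 1 < y → 0 ≤ g y := by
    intro y hy
    have hy0 : (0:ℝ) < y := lt_trans one_pos hy
    have : 0 < h y := lt_trans one_pos (hrange y hy0)
    have hprod : 0 < y * (h y) ^ ((1:ℝ)/n) := mul_pos hy0 (Real.rpow_pos_of_pos this _)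
    simp only [hgdef]
    exact le_of_lt (inv_pos.mpr hprod)
  have gnonneg' : ∀ t : Set ℝ, MeasurableSet t → t ⊆ Ioi (1:ℝ) →
      0 ≤ᵐ[Measure.restrict volume t] g := by
    intro t ht hsub
    exact (ae_restrict_iff' ht).2 (Filter.Eventually.of_forall fun y hy => gnonneg y (hsub hy))
  -- the constant c = 2^(-1/n)
  obtain ⟨c, hcdef⟩ : ∃ c : ℝ, c = (2:ℝ) ^ (-(1:ℝ)/(n:ℝ)) := ⟨_, rfl⟩
  have hc0 : 0 < c := by rw [hcdef]; exact Real.rpow_pos_of_pos two_pos _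
  have hc1 : c < 1 := by
    rw [hcdef]
    apply Real.rpow_lt_one_of_one_lt_of_neg one_lt_two
    exact div_neg_of_neg_of_pos (by norm_num) npos
  have hcinv : c * (2:ℝ) ^ ((1:ℝ)/(n:ℝ)) = 1 := by
    rw [hcdef, ← Real.rpow_add two_pos,
      show -(1:ℝ)/(n:ℝ) + (1:ℝ)/(n:ℝ) = 0 by ring, Real.rpow_zero]
  obtain ⟨K0, hK0def⟩ : ∃ K0 : ℝ, K0 = (2*A) ^ ((1:ℝ)/(n:ℝ)) / (1 - c) := ⟨_, rfl⟩
  have hK0 : 0 < K0 := by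
    rw [hK0def]
    apply div_pos (Real.rpow_pos_of_pos (by linarith) _) (by linarith)
  -- choose M' with K0 * ∫_{Ioi M'} g < D
  obtain ⟨M', hM'1, hM'tail⟩ :
      ∃ M' : ℝ, 1 ≤ M' ∧ K0 * ∫ y in Ioi M', g y < D := by
    have hU : ⋃ k : ℕ, Ioc (1:ℝ) (1 + k) = Ioi 1 := by
      ext y
      simp only [mem_iUnion, mem_Ioc, mem_Ioi]
      constructor
      · rintro ⟨k, h1, -⟩; exact h1
      · intro hy
        obtain ⟨k, hk⟩ := exists_nat_ge (y - 1)
        exact ⟨k, hy, by linarith⟩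
    have hmonoS : Monotone (fun k : ℕ => Ioc (1:ℝ) (1 + k)) := by
      intro i j hij
      apply Ioc_subset_Ioc_right
      have : (i:ℝ) ≤ j := by exact_mod_cast hij
      linarith
    have htend := tendsto_setIntegral_of_monotone (μ := volume) (f := g)
      (s := fun k : ℕ => Ioc (1:ℝ) (1 + k)) (fun k => measurableSet_Ioc) hmonoS
      (by rw [hU]; exact hint)
    rw [hU] at htend
    set T : ℝ := ∫ y in Ioi (1:ℝ), g y with hTdef
    have hDK : 0 < D / K0 := div_pos hD hK0
    obtain ⟨k, hk⟩ := (htend.eventually (eventually_gt_nhds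
      (show T - D/K0 < T by linarith))).exists
    refine ⟨1 + k, by linarith [Nat.cast_nonneg (α := ℝ) k], ?_⟩
    have hsplit : (∫ y in Ioc (1:ℝ) (1 + (k:ℝ)), g y) + ∫ y in Ioi (1 + (k:ℝ)), g y = T := by
      rw [← setIntegral_union Ioc_disjoint_Ioi_same measurableSet_Ioi
        (hint.mono_set fun y hy => hy.1)
        (hint.mono_set (Ioi_subset_Ioi (by linarith [Nat.cast_nonneg (α := ℝ) k]))),
        Ioc_union_Ioi_eq_Ioi (by linarith [Nat.cast_nonneg (α := ℝ) k])]
    have h2 : ∫ y in Ioi (1 + (k:ℝ)), g y < D / K0 := by linarith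
    calc K0 * ∫ y in Ioi (1 + (k:ℝ)), g y < K0 * (D / K0) :=
          (mul_lt_mul_iff_right₀ hK0).mpr h2
      _ = D := by field_simp
  obtain ⟨M, hMdef⟩ : ∃ M : ℝ, M = (2:ℝ) ^ ((1:ℝ)/(n:ℝ)) * M' := ⟨_, rfl⟩
  have hM0 : 0 < M := by
    rw [hMdef]; exact mul_pos (Real.rpow_pos_of_pos two_pos _) (by linarith)
  have hcM : c * M = M' := by rw [hMdef, ← mul_assoc, hcinv, one_mul]
  refine ⟨(M ^ n)⁻¹, by positivity, ?_⟩
  intro S a amono apos hkey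
  by_contra hcon
  push_neg at hcon
  have hSD : S ≤ S + D := by linarith
  have haSD : 0 < a (S + D) := apos _ ⟨hSD, le_refl _⟩
  obtain ⟨B, hBdef⟩ : ∃ B : ℝ, B = (a (S+D)) ^ (-(1:ℝ)/(n:ℝ)) := ⟨_, rfl⟩
  have hBM : M < B := by
    rw [hBdef]
    have h1 : a (S+D) < M ^ (-(n:ℝ)) := by
      rwa [Real.rpow_neg hM0.le, Real.rpow_natCast]
    have h2 : (M ^ (-(n:ℝ))) ^ (-(1:ℝ)/(n:ℝ)) < (a (S+D)) ^ (-(1:ℝ)/(n:ℝ)) :=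
      Real.rpow_lt_rpow_of_neg haSD h1
        (div_neg_of_neg_of_pos (by norm_num) npos)
    rwa [← Real.rpow_mul hM0.le, show (-(n:ℝ)) * (-(1:ℝ)/(n:ℝ)) = 1 by field_simp,
      Real.rpow_one] at h2
  have hcB : M' < c * B := by
    calc M' = c * M := hcM.symm
      _ < c * B := (mul_lt_mul_iff_right₀ hc0).mpr hBM
  have hcB1 : 1 < c * B := lt_of_le_of_lt hM'1 hcB
  -- the iteration sequence
  obtain ⟨δf, hδf⟩ : ∃ δf : ℝ → ℝ,
      ∀ x, δf x = (2*A / h ((a x) ^ (-(1:ℝ)/(n:ℝ)))) ^ ((1:ℝ)/(n:ℝ)) :=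
    ⟨_, fun x => rfl⟩
  obtain ⟨s, hs0, hssucc⟩ : ∃ s : ℕ → ℝ, s 0 = S + D ∧
      ∀ k, s (k+1) = s k - δf (s k) :=
    ⟨fun k => Nat.rec (motive := fun _ => ℝ) (S+D) (fun _ x => x - δf x) k, rfl, fun k => rfl⟩
  obtain ⟨b, hb⟩ : ∃ b : ℕ → ℝ, ∀ k, b k = (a (s k)) ^ (-(1:ℝ)/(n:ℝ)) :=
    ⟨_, fun k => rfl⟩
  have hb0 : b 0 = B := by rw [hb, hs0, hBdef]
  -- main induction
  have main : ∀ k : ℕ, (S ≤ s k ∧ s k ≤ S + D) ∧ a (s k) ≤ a (S+D) / 2^k ∧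
      S + D - s k ≤ K0 * ∫ y in Ioc (c*B) (c * b k), g y := by
    intro k
    induction k with
    | zero =>
      refine ⟨⟨by rw [hs0]; linarith, by rw [hs0]⟩, by rw [hs0]; norm_num, ?_⟩
      rw [hs0, hb0]
      simp
    | succ k ih =>
      obtain ⟨⟨hsk1, hsk2⟩, hak, hintk⟩ := ih
      have hmem : s k ∈ Icc S (S+D) := ⟨hsk1, hsk2⟩
      have hapos : 0 < a (s k) := apos _ hmem
      have hbpos : 0 < b k := by rw [hb]; exact Real.rpow_pos_of_pos hapos _
      have hbB : B ≤ b k := by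
        have hle := amono hmem ⟨hSD, le_refl _⟩ hsk2
        rw [hb, hBdef]
        exact Real.rpow_le_rpow_of_nonpos hapos hle
          (le_of_lt (div_neg_of_neg_of_pos (by norm_num) npos))
      have hcbk : M' < c * b k := lt_of_lt_of_le hcB ((mul_le_mul_iff_right₀ hc0).mpr hbB)
      have hcbk1 : 1 < c * b k := lt_of_le_of_lt hM'1 hcbk
      have hbk1 : 1 < b k := by nlinarith
      have hhbk : 1 < h (b k) := hrange _ (by linarith)
      set δ : ℝ := δf (s k) with hδ
      have hδeq : δ = (2*A / h (b k)) ^ ((1:ℝ)/(n:ℝ)) := by rw [hδ, hδf, ← hb]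
      have hδpos : 0 < δ := by
        rw [hδeq]
        exact Real.rpow_pos_of_pos (by positivity) _
      -- integral lower bound on the slab
      have hIsub : Ioc (c * b k) (b k) ⊆ Ioi (1:ℝ) := fun y hy => lt_trans hcbk1 hy.1
      have hIint : IntegrableOn g (Ioc (c * b k) (b k)) := hint.mono_set hIsub
      have hslab : (1-c) * ((h (b k)) ^ ((1:ℝ)/(n:ℝ)))⁻¹ ≤
          ∫ y in Ioc (c * b k) (b k), g y := by
        have hconst : ∀ y ∈ Ioc (c * b k) (b k),
            (b k * (h (b k)) ^ ((1:ℝ)/(n:ℝ)))⁻¹ ≤ g y := by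
          intro y hy
          have hy0 : (0:ℝ) < y := lt_trans (by linarith) hy.1
          have hhy : 0 < h y := lt_trans one_pos (hrange y hy0)
          have hhle : h y ≤ h (b k) := hmono (mem_Ioi.mpr hy0) (mem_Ioi.mpr (by linarith)) hy.2
          have h1 : y * (h y) ^ ((1:ℝ)/(n:ℝ)) ≤ b k * (h (b k)) ^ ((1:ℝ)/(n:ℝ)) :=
            mul_le_mul hy.2 (Real.rpow_le_rpow hhy.le hhle (by positivity))
              (by positivity) (by linarith)
          simp only [hgdef]
          exact inv_anti₀ (by positivity) h1
        have hlow := setIntegral_ge_of_const_le (μ := volume) measurableSet_Ioc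
          (by rw [Real.volume_Ioc]; exact ENNReal.ofReal_ne_top) hconst hIint
        rw [Real.volume_real_Ioc_of_le (by nlinarith), smul_eq_mul, mul_comm] at hlow
        have hhbkpow : 0 < (h (b k)) ^ ((1:ℝ)/(n:ℝ)) :=
          Real.rpow_pos_of_pos (by linarith) _
        calc (1-c) * ((h (b k)) ^ ((1:ℝ)/(n:ℝ)))⁻¹
            = ((b k)⁻¹ * b k) * ((1-c) * ((h (b k)) ^ ((1:ℝ)/(n:ℝ)))⁻¹) := by
              rw [inv_mul_cancel₀ (ne_of_gt hbpos), one_mul]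
          _ = (b k * (h (b k)) ^ ((1:ℝ)/(n:ℝ)))⁻¹ * (b k - c * b k) := by
              rw [mul_inv]; ring
          _ ≤ _ := hlow
      have hδle : δ ≤ K0 * ∫ y in Ioc (c * b k) (b k), g y := by
        have hδval : δ = K0 * ((1-c) * ((h (b k)) ^ ((1:ℝ)/(n:ℝ)))⁻¹) := by
          rw [hδeq, Real.div_rpow (by linarith) (by linarith), hK0def, ← mul_assoc,
            div_mul_cancel₀ _ (show (1:ℝ) - c ≠ 0 by linarith), div_eq_mul_inv]
        rw [hδval]
        exact mul_le_mul_of_nonneg_left hslab hK0.le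
      -- combine integrals
      have hcBbk : c * B ≤ c * b k := (mul_le_mul_iff_right₀ hc0).mpr hbB
      have hcbkbk : c * b k ≤ b k := by nlinarith
      have hIsub2 : Ioc (c*B) (c * b k) ⊆ Ioi (1:ℝ) := fun y hy => lt_trans hcB1 hy.1
      have hunion : S + D - s (k+1) ≤ K0 * ∫ y in Ioc (c*B) (b k), g y := by
        rw [hssucc]
        have hsum : (∫ y in Ioc (c*B) (c * b k), g y) + (∫ y in Ioc (c * b k) (b k), g y)
            = ∫ y in Ioc (c*B) (b k), g y := by
          rw [← setIntegral_union (Ioc_disjoint_Ioc_of_le le_rfl) measurableSet_Ioc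
            (hint.mono_set hIsub2) hIint, Ioc_union_Ioc_eq_Ioc hcBbk hcbkbk]
        have h2 : S + D - (s k - δ) ≤ K0 * ((∫ y in Ioc (c*B) (c * b k), g y) +
            (∫ y in Ioc (c * b k) (b k), g y)) := by
          rw [mul_add]; linarith
        rwa [hsum] at h2
      have hIoiM' : IntegrableOn g (Ioi M') := hint.mono_set (Ioi_subset_Ioi hM'1)
      have htail : K0 * ∫ y in Ioc (c*B) (b k), g y ≤ K0 * ∫ y in Ioi M', g y := by
        apply mul_le_mul_of_nonneg_left _ hK0.le
        apply setIntegral_mono_set hIoiM'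
          (gnonneg' _ measurableSet_Ioi fun y hy => lt_of_le_of_lt hM'1 hy)
        exact HasSubset.Subset.eventuallyLE fun y hy => lt_trans hcB hy.1
      have hsk1S : S < s (k+1) := by
        have := lt_of_le_of_lt (hunion.trans htail) hM'tail
        linarith
      have hsk1D : s (k+1) ≤ S + D := by
        rw [hssucc]
        have : 0 < δf (s k) := hδ ▸ hδpos
        linarith
      -- the step inequality
      have hstep : a (s (k+1)) ≤ a (s k) / 2 := by
        have hsum : s (k+1) + δ = s k := by rw [hssucc, hδ]; ring
        have h1 := hkey (s (k+1)) δ hsk1S.le hδpos.le (by rw [hsum]; exact hsk2)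
        rw [hsum, ← hb] at h1
        have hδn : δ ^ n = 2*A / h (b k) := by
          rw [hδeq, ← Real.rpow_natCast ((2*A / h (b k)) ^ ((1:ℝ)/(n:ℝ))) n,
            ← Real.rpow_mul (by positivity),
            show (1:ℝ)/(n:ℝ) * (n:ℝ) = 1 by field_simp, Real.rpow_one]
        rw [hδn] at h1
        have hH : 0 < h (b k) := by linarith
        rw [div_mul_eq_mul_div, div_le_div_iff₀ hH hH] at h1
        have h3 : A * (2 * a (s (k+1))) ≤ A * (a (s k)) := by
          have h2 : 2 * A * a (s (k+1)) ≤ A * a (s k) := le_of_mul_le_mul_right h1 hH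
          linarith
        have h4 := (mul_le_mul_iff_right₀ hA).mp h3
        linarith
      have hak1 : a (s (k+1)) ≤ a (S+D) / 2^(k+1) := by
        rw [pow_succ]
        calc a (s (k+1)) ≤ a (s k) / 2 := hstep
          _ ≤ (a (S+D) / 2^k) / 2 := by linarith
          _ = a (S+D) / (2^k * 2) := by ring
      -- b (k+1) relation
      have hapos1 : 0 < a (s (k+1)) := apos _ ⟨hsk1S.le, hsk1D⟩
      have hbk1rel : b k ≤ c * b (k+1) := by
        have h2 : (a (s k) / 2) ^ (-(1:ℝ)/(n:ℝ)) ≤ b (k+1) := by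
          rw [hb]
          exact Real.rpow_le_rpow_of_nonpos hapos1 hstep
            (le_of_lt (div_neg_of_neg_of_pos (by norm_num) npos))
        have h3 : (a (s k) / 2) ^ (-(1:ℝ)/(n:ℝ)) = b k / c := by
          rw [Real.div_rpow hapos.le (by norm_num), hb, hcdef]
        rw [h3, div_le_iff₀' hc0] at h2
        exact h2
      have hfinal : S + D - s (k+1) ≤ K0 * ∫ y in Ioc (c*B) (c * b (k+1)), g y := by
        refine hunion.trans (mul_le_mul_of_nonneg_left ?_ hK0.le)
        have hsub3 : Ioc (c*B) (c * b (k+1)) ⊆ Ioi (1:ℝ) := fun y hy => lt_trans hcB1 hy.1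
        apply setIntegral_mono_set (hint.mono_set hsub3)
          (gnonneg' _ measurableSet_Ioc hsub3)
        exact HasSubset.Subset.eventuallyLE (Ioc_subset_Ioc_right hbk1rel)
      exact ⟨⟨hsk1S.le, hsk1D⟩, hak1, hfinal⟩
  -- conclude
  have haS : 0 < a S := apos S ⟨le_refl _, hSD⟩
  obtain ⟨k, hk⟩ := pow_unbounded_of_one_lt (a (S+D) / a S) (one_lt_two (α := ℝ))
  obtain ⟨⟨hsk1, hsk2⟩, hak, -⟩ := main k
  have hle : a S ≤ a (s k) := amono ⟨le_refl _, hSD⟩ ⟨hsk1, hsk2⟩ hsk1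
  have h2k : (0:ℝ) < 2^k := by positivity
  rw [div_lt_iff₀ haS] at hk
  have hfin : a S ≤ a (S+D) / 2^k := le_trans hle hak
  rw [le_div_iff₀ h2k] at hfin
  nlinarith
end

section
/- Let n ≥ 2 and c ∈ (0, 1/2). There exists a constant C > 0, independent of t, such that for all t ∈ ℂ with |t| < 1, ∫_{B₁(0) ⊂ ℂⁿ} |t − (z₁² + ⋯ + z_n²)|^{−(1+c)} dμ(z) ≤ C, where dμ is the Lebesgue measure on ℂⁿ ≅ ℝ^{2n} and B₁(0) is the unit ball. -/
open MeasureTheory Metric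
open scoped ENNReal NNReal


section Aux

private lemma rpow_two_mul {p : ℝ} (hp : 0 ≤ p) (σ : ℝ) : (p * p) ^ (-σ) = p ^ (-(2*σ)) := by
  have hpp : p * p = p ^ (2:ℝ) := by
    rw [show (2:ℝ) = ((2:ℕ):ℝ) by norm_num, Real.rpow_natCast]; ring
  rw [hpp, ← Real.rpow_mul hp, show (2:ℝ) * -σ = -(2*σ) by ring]

private lemma prod_rpow_le_aux {σ : ℝ} (hσ : 0 < σ) {p q : ℝ} (hp : 0 ≤ p) (hpq : p ≤ q) :
    (p * q) ^ (-σ) ≤ p ^ (-(2*σ)) + q ^ (-(2*σ)) := by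
  have hq : 0 ≤ q := hp.trans hpq
  rcases eq_or_lt_of_le hp with h0 | h0
  · rw [← h0, zero_mul, Real.zero_rpow (neg_ne_zero.mpr hσ.ne')]
    exact add_nonneg (Real.rpow_nonneg le_rfl _) (Real.rpow_nonneg hq _)
  · have h2 : (p * q) ^ (-σ) ≤ (p * p) ^ (-σ) :=
      Real.rpow_le_rpow_of_nonpos (by nlinarith) (by nlinarith) (by linarith)
    calc (p * q) ^ (-σ) ≤ (p * p) ^ (-σ) := h2
      _ = p ^ (-(2*σ)) := rpow_two_mul hp σ
      _ ≤ _ := le_add_of_nonneg_right (Real.rpow_nonneg hq _)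

private lemma prod_rpow_le {σ : ℝ} (hσ : 0 < σ) {p q : ℝ} (hp : 0 ≤ p) (hq : 0 ≤ q) :
    (p * q) ^ (-σ) ≤ p ^ (-(2*σ)) + q ^ (-(2*σ)) := by
  rcases le_total p q with h | h
  · exact prod_rpow_le_aux hσ hp h
  · rw [mul_comm, add_comm]; exact prod_rpow_le_aux hσ hq h

private lemma prod_rpow_le_aux2 {s : ℝ} (hs : 0 < s) {r p q : ℝ} (hr : 0 < r) (hp : 0 ≤ p)
    (hpq : p ≤ q) (hmax : r ≤ q) :
    (p * q) ^ (-s) ≤ r ^ (-s) * (p ^ (-s) + q ^ (-s)) := by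
  have hq : 0 ≤ q := hp.trans hpq
  rcases eq_or_lt_of_le hp with h0 | h0
  · rw [← h0, zero_mul, Real.zero_rpow (neg_ne_zero.mpr hs.ne')]
    have := Real.rpow_nonneg hq (-s)
    have := Real.rpow_nonneg hr.le (-s)
    nlinarith [Real.rpow_nonneg (le_refl (0:ℝ) : (0:ℝ) ≤ 0) (-s)]
  · have h2 : (p * q) ^ (-s) ≤ (r * p) ^ (-s) :=
      Real.rpow_le_rpow_of_nonpos (by nlinarith) (by nlinarith) (by linarith)
    calc (p * q) ^ (-s) ≤ (r * p) ^ (-s) := h2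
      _ = r ^ (-s) * p ^ (-s) := Real.mul_rpow hr.le hp
      _ ≤ r ^ (-s) * (p ^ (-s) + q ^ (-s)) := by
          have := Real.rpow_nonneg hq (-s)
          have := Real.rpow_nonneg hr.le (-s)
          nlinarith [Real.rpow_nonneg hp (-s)]

private lemma prod_rpow_le2 {s : ℝ} (hs : 0 < s) {r p q : ℝ} (hr : 0 < r) (hp : 0 ≤ p)
    (hq : 0 ≤ q) (hmax : r ≤ max p q) :
    (p * q) ^ (-s) ≤ r ^ (-s) * (p ^ (-s) + q ^ (-s)) := by
  rcases le_total p q with h | h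
  · exact prod_rpow_le_aux2 hs hr hp h (by rwa [max_eq_right h] at hmax)
  · rw [mul_comm, add_comm]
    exact prod_rpow_le_aux2 hs hr hq h (by rwa [max_eq_left h] at hmax)

end Aux

private lemma scalar_id {s : ℝ} (k : ℕ) :
    ((2:ℝ)⁻¹ ^ (k+1) : ℝ) ^ (-s) * ((2:ℝ)⁻¹ ^ k)^2 = (2:ℝ) ^ s * ((2:ℝ) ^ (s - 2)) ^ k := by
  have h2 : ((2:ℝ)⁻¹) = (2:ℝ) ^ (-1:ℝ) := by rw [Real.rpow_neg_one]
  rw [h2, ← Real.rpow_natCast ((2:ℝ) ^ (-1:ℝ)) (k+1), ← Real.rpow_natCast ((2:ℝ) ^ (-1:ℝ)) k,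
    ← Real.rpow_mul (by norm_num), ← Real.rpow_mul (by norm_num),
    ← Real.rpow_mul (by norm_num), ← Real.rpow_natCast ((2:ℝ) ^ ((-1:ℝ)* k)) 2,
    ← Real.rpow_mul (by norm_num), ← Real.rpow_natCast ((2:ℝ) ^ (s-2)) k,
    ← Real.rpow_mul (by norm_num), ← Real.rpow_add (by norm_num : (0:ℝ) < 2),
    ← Real.rpow_add (by norm_num : (0:ℝ) < 2)]
  push_cast
  ring_nf

private lemma lintegral_rpow_ball_lt_top {s : ℝ} (hs0 : 0 < s) (hs2 : s < 2) :
    ∫⁻ z in ball (0:ℂ) 1, ENNReal.ofReal (‖z‖ ^ (-s)) < ⊤ := by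
  set V := volume (ball (0:ℂ) 1) with hV
  have hVfin : V < ⊤ := measure_ball_lt_top
  set A : ℕ → Set ℂ := fun k => ball (0:ℂ) ((2:ℝ)⁻¹ ^ k) \ ball 0 ((2:ℝ)⁻¹ ^ (k+1)) with hA
  -- covering
  have hcover : ball (0:ℂ) 1 ⊆ {0} ∪ ⋃ k, A k := by
    intro z hz
    rcases eq_or_ne z 0 with rfl | hz0
    · exact Or.inl rfl
    right
    have habs : 0 < ‖z‖ := by simpa using hz0
    have hlt1 : ‖z‖ < 1 := by
      simpa using mem_ball_zero_iff.mp hz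
    have hex : ∃ m, ((2:ℝ)⁻¹) ^ (m+1) ≤ ‖z‖ := by
      obtain ⟨m, hm⟩ := exists_pow_lt_of_lt_one habs (by norm_num : (2:ℝ)⁻¹ < 1)
      rcases m with _ | m
      · simp at hm; exact absurd hlt1 (by linarith)
      · exact ⟨m, hm.le⟩
    classical
    set k := Nat.find hex with hk
    have hk1 : ((2:ℝ)⁻¹) ^ (k+1) ≤ ‖z‖ := Nat.find_spec hex
    have hk2 : ‖z‖ < ((2:ℝ)⁻¹) ^ k := by
      rcases Nat.eq_zero_or_pos k with h0 | hpos
      · rw [h0]; simpa using hlt1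
      · obtain ⟨j, hj⟩ := Nat.exists_eq_add_of_lt hpos
        have hmin := Nat.find_min hex (show j < k by omega)
        push_neg at hmin
        have : k = j + 1 := by omega
        rw [this]
        exact hmin
    refine Set.mem_iUnion.mpr ⟨k, ?_⟩
    constructor
    · exact mem_ball_zero_iff.mpr (by simpa using hk2)
    · intro hmem
      exact absurd (mem_ball_zero_iff.mp hmem) (by simpa using hk1)
  -- bound per annulus
  have hterm : ∀ k : ℕ, ∫⁻ z in A k, ENNReal.ofReal (‖z‖ ^ (-s))
      ≤ ENNReal.ofReal ((2:ℝ) ^ s) * (ENNReal.ofReal ((2:ℝ) ^ (s-2))) ^ k * V := by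
    intro k
    have hb : ∫⁻ z in A k, ENNReal.ofReal (‖z‖ ^ (-s))
        ≤ ∫⁻ _ in A k, ENNReal.ofReal ((((2:ℝ)⁻¹) ^ (k+1)) ^ (-s)) := by
      refine setLIntegral_mono measurable_const fun z hz => ?_
      refine ENNReal.ofReal_le_ofReal ?_
      refine Real.rpow_le_rpow_of_nonpos (by positivity) ?_ (by linarith)
      have := hz.2
      simpa using not_lt.mp (fun h => this (mem_ball_zero_iff.mpr h))
    rw [setLIntegral_const] at hb
    have hAk : volume (A k) ≤ ENNReal.ofReal (((2:ℝ)⁻¹ ^ k)^2) * V := by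
      calc volume (A k) ≤ volume (ball (0:ℂ) ((2:ℝ)⁻¹ ^ k)) :=
            measure_mono Set.diff_subset
        _ = ENNReal.ofReal (((2:ℝ)⁻¹ ^ k) ^ Module.finrank ℝ ℂ) * V :=
            Measure.addHaar_ball volume 0 (by positivity)
        _ = ENNReal.ofReal (((2:ℝ)⁻¹ ^ k)^2) * V := by
            rw [Complex.finrank_real_complex]
    calc ∫⁻ z in A k, ENNReal.ofReal (‖z‖ ^ (-s))
        ≤ ENNReal.ofReal ((((2:ℝ)⁻¹) ^ (k+1)) ^ (-s)) * (ENNReal.ofReal (((2:ℝ)⁻¹ ^ k)^2) * V) := by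
          exact hb.trans (mul_le_mul_right hAk _)
      _ = ENNReal.ofReal ((((2:ℝ)⁻¹) ^ (k+1)) ^ (-s) * ((2:ℝ)⁻¹ ^ k)^2) * V := by
          rw [← mul_assoc, ← ENNReal.ofReal_mul (by positivity)]
      _ = ENNReal.ofReal ((2:ℝ) ^ s * ((2:ℝ) ^ (s-2)) ^ k) * V := by rw [scalar_id]
      _ = ENNReal.ofReal ((2:ℝ) ^ s) * (ENNReal.ofReal ((2:ℝ) ^ (s-2))) ^ k * V := by
          rw [ENNReal.ofReal_mul (by positivity), ENNReal.ofReal_pow (by positivity)]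
  calc ∫⁻ z in ball (0:ℂ) 1, ENNReal.ofReal (‖z‖ ^ (-s))
      ≤ ∫⁻ z in {0} ∪ ⋃ k, A k, ENNReal.ofReal (‖z‖ ^ (-s)) :=
        lintegral_mono' (Measure.restrict_mono hcover le_rfl) le_rfl
    _ ≤ (∫⁻ z in ({0} : Set ℂ), ENNReal.ofReal (‖z‖ ^ (-s)))
        + ∫⁻ z in ⋃ k, A k, ENNReal.ofReal (‖z‖ ^ (-s)) := lintegral_union_le _ _ _
    _ ≤ 0 + ∑' k, ∫⁻ z in A k, ENNReal.ofReal (‖z‖ ^ (-s)) := by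
        gcongr
        · exact le_of_eq (setLIntegral_measure_zero _ _ (measure_singleton 0))
        · exact lintegral_iUnion_le _ _
    _ ≤ ∑' k, ENNReal.ofReal ((2:ℝ) ^ s) * (ENNReal.ofReal ((2:ℝ) ^ (s-2))) ^ k * V := by
        rw [zero_add]; exact ENNReal.tsum_le_tsum hterm
    _ = ENNReal.ofReal ((2:ℝ) ^ s) * V * ∑' k, (ENNReal.ofReal ((2:ℝ) ^ (s-2))) ^ k := by
        rw [ENNReal.tsum_mul_right, ENNReal.tsum_mul_left]; ring
    _ < ⊤ := by
        have hratio : ENNReal.ofReal ((2:ℝ) ^ (s-2)) < 1 := by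
          rw [show (1:ℝ≥0∞) = ENNReal.ofReal 1 by simp]
          refine (ENNReal.ofReal_lt_ofReal_iff (by norm_num)).mpr ?_
          rw [show (1:ℝ) = (2:ℝ) ^ (0:ℝ) by simp]
          exact Real.rpow_lt_rpow_of_exponent_lt (by norm_num) (by linarith)
        rw [ENNReal.tsum_geometric]
        have h1 : ENNReal.ofReal ((2:ℝ)^s) * V < ⊤ :=
          ENNReal.mul_lt_top ENNReal.ofReal_lt_top hVfin
        have h2 : (1 - ENNReal.ofReal ((2:ℝ)^(s-2)))⁻¹ < ⊤ :=
          ENNReal.inv_lt_top.mpr (tsub_pos_iff_lt.mpr hratio)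
        exact ENNReal.mul_lt_top h1 h2


private lemma meas_abs_rpow (b : ℂ) (s : ℝ) :
    Measurable fun z : ℂ => ENNReal.ofReal (‖b - z^2‖ ^ s) := by
  have h : Measurable fun z : ℂ => ‖b - z ^ 2‖ :=
    continuous_norm.measurable.comp (measurable_const.sub (measurable_id'.pow_const 2))
  exact (h.pow measurable_const).ennreal_ofReal

private lemma meas_abs_sub_rpow (a : ℂ) (s : ℝ) :
    Measurable fun z : ℂ => ENNReal.ofReal (‖z - a‖ ^ s) := by
  have h : Measurable fun z : ℂ => ‖z - a‖ :=
    continuous_norm.measurable.comp (measurable_id'.sub measurable_const)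
  exact (h.pow measurable_const).ennreal_ofReal

/-- Uniform (in the center `a`) bound for `∫_{B(0,1)} |z-a|^{-s}` when `0 < s < 2`. -/
private lemma lemA {s : ℝ} (hs0 : 0 < s) (hs2 : s < 2) :
    ∃ C : ℝ≥0∞, C ≠ ⊤ ∧ ∀ a : ℂ,
      ∫⁻ z in ball (0:ℂ) 1, ENNReal.ofReal (‖z - a‖ ^ (-s)) ≤ C := by
  have hfin : ∫⁻ z in ball (0:ℂ) 1, ENNReal.ofReal (‖z‖ ^ (-s)) < ⊤ :=
    lintegral_rpow_ball_lt_top hs0 hs2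
  refine ⟨volume (ball (0:ℂ) 1) + ∫⁻ z in ball (0:ℂ) 1, ENNReal.ofReal (‖z‖ ^ (-s)),
    (ENNReal.add_lt_top.mpr ⟨measure_ball_lt_top, hfin⟩).ne, fun a => ?_⟩
  have htrans : ∫⁻ z in ball a 1, ENNReal.ofReal (‖z - a‖ ^ (-s))
      = ∫⁻ z in ball (0:ℂ) 1, ENNReal.ofReal (‖z‖ ^ (-s)) := by
    have hmp : MeasurePreserving (fun z : ℂ => z + a) volume volume :=
      measurePreserving_add_right volume a
    have hemb : MeasurableEmbedding (fun z : ℂ => z + a) :=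
      (MeasurableEquiv.addRight a).measurableEmbedding
    have hkey := hmp.setLIntegral_comp_preimage_emb hemb
      (fun z => ENNReal.ofReal (‖z - a‖ ^ (-s))) (ball a 1)
    rw [← hkey]
    have hpre : (fun z : ℂ => z + a) ⁻¹' ball a 1 = ball 0 1 := by
      ext z; simp [mem_ball, dist_eq_norm]
    rw [hpre]
    refine setLIntegral_congr_fun measurableSet_ball (fun z _ => ?_)
    simp
  have hpt : ∀ z : ℂ, ENNReal.ofReal (‖z - a‖ ^ (-s))
      ≤ 1 + (ball a 1).indicator (fun z => ENNReal.ofReal (‖z - a‖ ^ (-s))) z := by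
    intro z
    by_cases hz : z ∈ ball a 1
    · rw [Set.indicator_of_mem hz]; exact le_add_self
    · rw [Set.indicator_of_notMem hz, add_zero]
      have h1 : (1:ℝ) ≤ ‖z - a‖ := by
        have := mem_ball.not.mp hz
        rw [Complex.dist_eq] at this
        linarith [not_lt.mp this]
      calc ENNReal.ofReal (‖z - a‖ ^ (-s))
          ≤ ENNReal.ofReal ((1:ℝ) ^ (-s)) :=
            ENNReal.ofReal_le_ofReal
              (Real.rpow_le_rpow_of_nonpos one_pos h1 (by linarith))
        _ = 1 := by simp
  calc ∫⁻ z in ball (0:ℂ) 1, ENNReal.ofReal (‖z - a‖ ^ (-s))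
      ≤ ∫⁻ z in ball (0:ℂ) 1,
          (1 + (ball a 1).indicator (fun z => ENNReal.ofReal (‖z - a‖ ^ (-s))) z) :=
        lintegral_mono fun z => hpt z
    _ = volume (ball (0:ℂ) 1)
        + ∫⁻ z in ball (0:ℂ) 1,
            (ball a 1).indicator (fun z => ENNReal.ofReal (‖z - a‖ ^ (-s))) z := by
        rw [lintegral_add_left measurable_const]
        simp [Measure.restrict_apply_univ]
    _ ≤ volume (ball (0:ℂ) 1)
        + ∫⁻ z, (ball a 1).indicator (fun z => ENNReal.ofReal (‖z - a‖ ^ (-s))) z :=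
        add_le_add_right (setLIntegral_le_lintegral _ _) _
    _ = volume (ball (0:ℂ) 1) + ∫⁻ z in ball a 1, ENNReal.ofReal (‖z - a‖ ^ (-s)) := by
        rw [lintegral_indicator measurableSet_ball]
    _ = _ := by rw [htrans]

private lemma sq_root_exists (a : ℂ) : ∃ ρ : ℂ, ρ^2 = a :=
  ⟨a ^ ((2:ℕ):ℂ)⁻¹, Complex.cpow_nat_inv_pow a two_ne_zero⟩

private lemma lemB {σ : ℝ} (hσ0 : 0 < σ) (hσ1 : σ < 1)
    {C : ℝ≥0∞} (hCb : ∀ a : ℂ,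
      ∫⁻ z in ball (0:ℂ) 1, ENNReal.ofReal (‖z - a‖ ^ (-(2*σ))) ≤ C) :
    ∀ a : ℂ, ∫⁻ z in ball (0:ℂ) 1, ENNReal.ofReal (‖a - z^2‖ ^ (-σ)) ≤ C + C := by
  intro a
  obtain ⟨ρ, hρ⟩ := sq_root_exists a
  have hpt : ∀ z : ℂ, ENNReal.ofReal (‖a - z^2‖ ^ (-σ))
      ≤ ENNReal.ofReal (‖z - ρ‖ ^ (-(2*σ)))
        + ENNReal.ofReal (‖z - (-ρ)‖ ^ (-(2*σ))) := by
    intro z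
    rw [← ENNReal.ofReal_add (Real.rpow_nonneg (norm_nonneg _) _)
      (Real.rpow_nonneg (norm_nonneg _) _)]
    refine ENNReal.ofReal_le_ofReal ?_
    have habs : ‖a - z^2‖ = ‖z - ρ‖ * ‖z - (-ρ)‖ := by
      rw [← norm_mul]
      have h1 : a - z^2 = -((z - ρ) * (z - (-ρ))) := by rw [← hρ]; ring
      rw [h1, norm_neg]
    rw [habs]
    exact prod_rpow_le hσ0 (norm_nonneg _) (norm_nonneg _)
  calc ∫⁻ z in ball (0:ℂ) 1, ENNReal.ofReal (‖a - z^2‖ ^ (-σ))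
      ≤ ∫⁻ z in ball (0:ℂ) 1,
          (ENNReal.ofReal (‖z - ρ‖ ^ (-(2*σ)))
            + ENNReal.ofReal (‖z - (-ρ)‖ ^ (-(2*σ)))) := lintegral_mono hpt
    _ = (∫⁻ z in ball (0:ℂ) 1, ENNReal.ofReal (‖z - ρ‖ ^ (-(2*σ))))
        + ∫⁻ z in ball (0:ℂ) 1, ENNReal.ofReal (‖z - (-ρ)‖ ^ (-(2*σ))) :=
        lintegral_add_left (meas_abs_sub_rpow ρ _) _
    _ ≤ C + C := add_le_add (hCb ρ) (hCb (-ρ))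

private lemma lemJ {s : ℝ} (hs0 : 0 < s) (hs2 : s < 2)
    {C : ℝ≥0∞} (hCb : ∀ a : ℂ,
      ∫⁻ z in ball (0:ℂ) 1, ENNReal.ofReal (‖z - a‖ ^ (-s)) ≤ C) :
    ∀ b : ℂ, b ≠ 0 →
      ∫⁻ z in ball (0:ℂ) 1, ENNReal.ofReal (‖b - z^2‖ ^ (-s))
        ≤ ENNReal.ofReal (‖b‖ ^ (-(s/2))) * (C + C) := by
  intro b hb
  obtain ⟨ρ, hρ⟩ := sq_root_exists b
  have hρ0 : ρ ≠ 0 := by rintro rfl; rw [← hρ] at hb; simp at hb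
  have hrpos : 0 < ‖ρ‖ := norm_pos_iff.mpr hρ0
  have hbr : ‖b‖ ^ (-(s/2)) = ‖ρ‖ ^ (-s) := by
    rw [← hρ, norm_pow, ← Real.rpow_natCast (‖ρ‖) 2,
      ← Real.rpow_mul (norm_nonneg _)]
    norm_num
    ring_nf
  have hpt : ∀ z : ℂ, ENNReal.ofReal (‖b - z^2‖ ^ (-s))
      ≤ ENNReal.ofReal (‖b‖ ^ (-(s/2)))
        * (ENNReal.ofReal (‖z - ρ‖ ^ (-s))
          + ENNReal.ofReal (‖z - (-ρ)‖ ^ (-s))) := by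
    intro z
    rw [← ENNReal.ofReal_add (Real.rpow_nonneg (norm_nonneg _) _)
      (Real.rpow_nonneg (norm_nonneg _) _),
      ← ENNReal.ofReal_mul (Real.rpow_nonneg (norm_nonneg _) _)]
    refine ENNReal.ofReal_le_ofReal ?_
    have habs : ‖b - z^2‖ = ‖z - ρ‖ * ‖z - (-ρ)‖ := by
      rw [← norm_mul]
      have h1 : b - z^2 = -((z - ρ) * (z - (-ρ))) := by rw [← hρ]; ring
      rw [h1, norm_neg]
    have hmax : ‖ρ‖ ≤ max (‖z - ρ‖) (‖z - (-ρ)‖) := by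
      have htri : 2 * ‖ρ‖ ≤ ‖z - (-ρ)‖ + ‖z - ρ‖ := by
        have h2 : (2:ℂ) * ρ = (z - (-ρ)) - (z - ρ) := by ring
        calc 2 * ‖ρ‖ = ‖(2:ℂ) * ρ‖ := by
              rw [norm_mul]; norm_num
          _ ≤ _ := by rw [h2]; exact norm_sub_le _ _
      rcases le_total (‖z - ρ‖) (‖z - (-ρ)‖) with h|h
      · rw [max_eq_right h]; linarith
      · rw [max_eq_left h]; linarith
    rw [habs, hbr]
    exact prod_rpow_le2 hs0 hrpos (norm_nonneg _) (norm_nonneg _) hmax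
  calc ∫⁻ z in ball (0:ℂ) 1, ENNReal.ofReal (‖b - z^2‖ ^ (-s))
      ≤ ∫⁻ z in ball (0:ℂ) 1, ENNReal.ofReal (‖b‖ ^ (-(s/2)))
          * (ENNReal.ofReal (‖z - ρ‖ ^ (-s))
            + ENNReal.ofReal (‖z - (-ρ)‖ ^ (-s))) := lintegral_mono hpt
    _ = ENNReal.ofReal (‖b‖ ^ (-(s/2)))
        * ∫⁻ z in ball (0:ℂ) 1, (ENNReal.ofReal (‖z - ρ‖ ^ (-s))
            + ENNReal.ofReal (‖z - (-ρ)‖ ^ (-s))) :=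
        lintegral_const_mul _ ((meas_abs_sub_rpow ρ _).add (meas_abs_sub_rpow (-ρ) _))
    _ ≤ ENNReal.ofReal (‖b‖ ^ (-(s/2))) * (C + C) := by
        refine mul_le_mul_right ?_ _
        rw [lintegral_add_left (meas_abs_sub_rpow ρ _)]
        exact add_le_add (hCb ρ) (hCb (-ρ))
private lemma lemI {s : ℝ} (hs0 : 0 < s) (hs2 : s < 2) :
    ∃ K : ℝ≥0∞, K ≠ ⊤ ∧ ∀ a : ℂ,
      (∫⁻ x in ball (0:ℂ) 1, ∫⁻ y in ball (0:ℂ) 1,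
        ENNReal.ofReal (‖a - x^2 - y^2‖ ^ (-s))) ≤ K := by
  obtain ⟨C, hC, hCb⟩ := lemA hs0 hs2
  obtain ⟨C', hC', hC'b⟩ := lemA (s := 2*(s/2)) (by linarith) (by linarith)
  have hB := lemB (σ := s/2) (by linarith) (by linarith) hC'b
  have hJ := lemJ hs0 hs2 hCb
  refine ⟨(C' + C') * (C + C),
    ENNReal.mul_ne_top (ENNReal.add_ne_top.mpr ⟨hC', hC'⟩)
      (ENNReal.add_ne_top.mpr ⟨hC, hC⟩), fun a => ?_⟩
  have hnull : volume {x : ℂ | a - x^2 = 0} = 0 := by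
    obtain ⟨ρ, hρ⟩ := sq_root_exists a
    have hsub : {x : ℂ | a - x^2 = 0} ⊆ {ρ, -ρ} := by
      intro x hx
      have hx0 : a - x^2 = 0 := hx
      have hx2 : (x - ρ) * (x + ρ) = 0 := by linear_combination -hx0 - hρ
      rcases mul_eq_zero.mp hx2 with h|h
      · exact Or.inl (sub_eq_zero.mp h)
      · exact Or.inr (eq_neg_of_add_eq_zero_left h)
    exact measure_mono_null hsub
      (((Set.finite_singleton (-ρ)).insert ρ).measure_zero _)
  have hae : ∀ᵐ x ∂(volume.restrict (ball (0:ℂ) 1)),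
      (∫⁻ y in ball (0:ℂ) 1, ENNReal.ofReal (‖a - x^2 - y^2‖ ^ (-s)))
        ≤ ENNReal.ofReal (‖a - x^2‖ ^ (-(s/2))) * (C + C) := by
    refine ae_restrict_of_ae ?_
    have h1 : ∀ᵐ x ∂(volume : Measure ℂ), x ∉ {x : ℂ | a - x^2 = 0} :=
      compl_mem_ae_iff.mpr hnull
    filter_upwards [h1] with x hx
    exact hJ (a - x^2) (fun h => hx h)
  calc (∫⁻ x in ball (0:ℂ) 1, ∫⁻ y in ball (0:ℂ) 1,
        ENNReal.ofReal (‖a - x^2 - y^2‖ ^ (-s)))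
      ≤ ∫⁻ x in ball (0:ℂ) 1,
          ENNReal.ofReal (‖a - x^2‖ ^ (-(s/2))) * (C + C) :=
        lintegral_mono_ae hae
    _ = (∫⁻ x in ball (0:ℂ) 1, ENNReal.ofReal (‖a - x^2‖ ^ (-(s/2)))) * (C + C) :=
        lintegral_mul_const _ (meas_abs_rpow a _)
    _ ≤ (C' + C') * (C + C) := mul_le_mul_left (hB a) _

private lemma lemPi {s : ℝ} (hs0 : 0 < s) (hs2 : s < 2) :
    ∃ K : ℝ≥0∞, K ≠ ⊤ ∧ ∀ (m : ℕ) (a : ℂ),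
      (∫⁻ z in Set.pi Set.univ (fun _ : Fin (m+2) => ball (0:ℂ) 1),
        ENNReal.ofReal (‖a - ∑ i, (z i)^2‖ ^ (-s)))
        ≤ K * (volume (ball (0:ℂ) 1)) ^ m := by
  obtain ⟨K, hK, hKb⟩ := lemI hs0 hs2
  refine ⟨K, hK, ?_⟩
  intro m
  induction m with
  | zero =>
    intro a
    have hmp := volume_preserving_finTwoArrow ℂ
    have hemb := (MeasurableEquiv.finTwoArrow (α := ℂ)).measurableEmbedding
    set g : ℂ × ℂ → ℝ≥0∞ :=
      fun p => ENNReal.ofReal (‖a - p.1^2 - p.2^2‖ ^ (-s)) with hg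
    have hgm : Measurable g := by
      have h1 : Measurable fun p : ℂ × ℂ => ‖a - p.1^2 - p.2^2‖ :=
        continuous_norm.measurable.comp
          ((measurable_const.sub (measurable_fst.pow_const 2)).sub (measurable_snd.pow_const 2))
      exact (h1.pow measurable_const).ennreal_ofReal
    have hkey := hmp.setLIntegral_comp_preimage_emb hemb g (ball (0:ℂ) 1 ×ˢ ball (0:ℂ) 1)
    have hpre : (⇑(MeasurableEquiv.finTwoArrow (α := ℂ))) ⁻¹' (ball (0:ℂ) 1 ×ˢ ball (0:ℂ) 1)
        = Set.pi Set.univ (fun _ : Fin 2 => ball (0:ℂ) 1) := by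
      ext z
      simp [Set.mem_pi, Fin.forall_fin_two]
    rw [hpre] at hkey
    have hfun : ∀ z : Fin 2 → ℂ, g (MeasurableEquiv.finTwoArrow z)
        = ENNReal.ofReal (‖a - ∑ i, (z i)^2‖ ^ (-s)) := by
      intro z
      simp only [hg, MeasurableEquiv.finTwoArrow_apply, Fin.sum_univ_two, sub_sub]
    calc (∫⁻ z in Set.pi Set.univ (fun _ : Fin 2 => ball (0:ℂ) 1),
          ENNReal.ofReal (‖a - ∑ i, (z i)^2‖ ^ (-s)))
        = ∫⁻ p in ball (0:ℂ) 1 ×ˢ ball (0:ℂ) 1, g p := by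
          rw [← hkey]; exact lintegral_congr fun z => (hfun z).symm
      _ = ∫⁻ x in ball (0:ℂ) 1, ∫⁻ y in ball (0:ℂ) 1, g (x, y) := by
          rw [Measure.volume_eq_prod, ← Measure.prod_restrict]
          exact lintegral_prod _ hgm.aemeasurable
      _ ≤ K * (volume (ball (0:ℂ) 1)) ^ 0 := by simpa using hKb a
  | succ m ih =>
    intro a
    have hmp := volume_preserving_piFinSuccAbove (fun _ : Fin (m+3) => ℂ) 0
    have hemb := (MeasurableEquiv.piFinSuccAbove (fun _ : Fin (m+3) => ℂ) 0).measurableEmbedding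
    set g : ℂ × (Fin (m+2) → ℂ) → ℝ≥0∞ :=
      fun p => ENNReal.ofReal (‖a - p.1^2 - ∑ i, (p.2 i)^2‖ ^ (-s)) with hg
    have hgm : Measurable g := by
      have hsum : Measurable fun p : ℂ × (Fin (m+2) → ℂ) => ∑ i, (p.2 i)^2 :=
        Finset.measurable_sum _ fun i _ => ((measurable_pi_apply i).comp measurable_snd).pow_const 2
      have h1 : Measurable fun p : ℂ × (Fin (m+2) → ℂ) =>
          ‖a - p.1^2 - ∑ i, (p.2 i)^2‖ :=
        continuous_norm.measurable.comp
          ((measurable_const.sub (measurable_fst.pow_const 2)).sub hsum)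
      exact (h1.pow measurable_const).ennreal_ofReal
    have hkey := hmp.setLIntegral_comp_preimage_emb hemb g
      ((ball (0:ℂ) 1) ×ˢ (Set.pi Set.univ fun _ : Fin (m+2) => ball (0:ℂ) 1))
    have hpre : (⇑(MeasurableEquiv.piFinSuccAbove (fun _ : Fin (m+3) => ℂ) 0)) ⁻¹'
          ((ball (0:ℂ) 1) ×ˢ (Set.pi Set.univ fun _ : Fin (m+2) => ball (0:ℂ) 1))
        = Set.pi Set.univ (fun _ : Fin (m+3) => ball (0:ℂ) 1) := by
      ext z
      simp [Set.mem_pi, MeasurableEquiv.piFinSuccAbove_apply, Fin.forall_fin_succ,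
        Fin.removeNth, Fin.zero_succAbove, Fin.tail]
    rw [hpre] at hkey
    have hfun : ∀ z : Fin (m+3) → ℂ,
        g (MeasurableEquiv.piFinSuccAbove (fun _ : Fin (m+3) => ℂ) 0 z)
        = ENNReal.ofReal (‖a - ∑ i, (z i)^2‖ ^ (-s)) := by
      intro z
      simp only [hg, MeasurableEquiv.piFinSuccAbove_apply, Fin.insertNthEquiv_symm_apply,
        Fin.removeNth, Fin.zero_succAbove, Fin.sum_univ_succ, sub_sub]
    calc (∫⁻ z in Set.pi Set.univ (fun _ : Fin (m+3) => ball (0:ℂ) 1),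
          ENNReal.ofReal (‖a - ∑ i, (z i)^2‖ ^ (-s)))
        = ∫⁻ p in (ball (0:ℂ) 1) ×ˢ (Set.pi Set.univ fun _ : Fin (m+2) => ball (0:ℂ) 1), g p := by
          rw [← hkey]; exact lintegral_congr fun z => (hfun z).symm
      _ = ∫⁻ x in ball (0:ℂ) 1,
            ∫⁻ y in Set.pi Set.univ (fun _ : Fin (m+2) => ball (0:ℂ) 1), g (x, y) := by
          rw [Measure.volume_eq_prod, ← Measure.prod_restrict]
          exact lintegral_prod _ hgm.aemeasurable
      _ ≤ ∫⁻ _ in ball (0:ℂ) 1, K * (volume (ball (0:ℂ) 1)) ^ m :=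
          lintegral_mono fun x => ih (a - x^2)
      _ = K * (volume (ball (0:ℂ) 1)) ^ m * volume (ball (0:ℂ) 1) := by
          rw [setLIntegral_const]
      _ = K * (volume (ball (0:ℂ) 1)) ^ (m+1) := by rw [mul_assoc, ← pow_succ]

/-- Uniform bound on the conifold integral: for `n ≥ 2` and `c ∈ (0, 1/2)` there is
`C > 0`, independent of `t`, with
`∫_{B₁(0) ⊂ ℂⁿ} |t − (z₁² + ⋯ + z_n²)|^{−(1+c)} dμ(z) ≤ C` for all `|t| < 1`.
Here `ℂⁿ` is realized as `Fin n → ℂ` with the Lebesgue (product) measure, and the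
unit ball is the Euclidean ball `∑ |zᵢ|² < 1`. -/
theorem stmt1 (n : ℕ) (hn : 2 ≤ n) (c : ℝ) (hc : c ∈ Set.Ioo (0 : ℝ) (1 / 2)) :
    ∃ C : ℝ, 0 < C ∧ ∀ t : ℂ, ‖t‖ < 1 →
      (∫ z in {z : Fin n → ℂ | ∑ i, (‖z i‖) ^ 2 < 1},
          (‖t - ∑ i, (z i) ^ 2‖) ^ (-(1 + c))) ≤ C := by
  obtain ⟨hc0, hc1⟩ := hc
  obtain ⟨m, rfl⟩ : ∃ m, n = m + 2 := ⟨n - 2, by omega⟩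
  have hs0 : (0:ℝ) < 1 + c := by linarith
  have hs2 : (1:ℝ) + c < 2 := by
    have : c < 1/2 := hc1
    linarith
  obtain ⟨K, hK, hKb⟩ := lemPi hs0 hs2
  set V := volume (ball (0:ℂ) 1) with hV
  have hVfin : V ≠ ⊤ := measure_ball_lt_top.ne
  set Ctot : ℝ≥0∞ := K * V ^ m with hCtot
  have hCtotfin : Ctot ≠ ⊤ := ENNReal.mul_ne_top hK (ENNReal.pow_ne_top hVfin)
  refine ⟨Ctot.toReal + 1, by positivity, fun t ht => ?_⟩
  set S := {z : Fin (m+2) → ℂ | ∑ i, (‖z i‖) ^ 2 < 1} with hS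
  have hsub : S ⊆ Set.pi Set.univ (fun _ : Fin (m+2) => ball (0:ℂ) 1) := by
    intro z hz i _
    have hzi : (‖z i‖)^2 < 1 := by
      have hle : (‖z i‖)^2 ≤ ∑ j, (‖z j‖)^2 :=
        Finset.single_le_sum (f := fun j => (‖z j‖)^2)
          (fun j _ => by positivity) (Finset.mem_univ i)
      exact lt_of_le_of_lt hle hz
    have habs : ‖z i‖ < 1 := by nlinarith [norm_nonneg (z i)]
    exact mem_ball_zero_iff.mpr (by simpa)
  have h1 : Measurable fun z : Fin (m+2) → ℂ => ∑ i, (z i)^2 :=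
    Finset.measurable_sum _ fun i _ => (measurable_pi_apply i).pow_const 2
  have hmeas : Measurable fun z : Fin (m+2) → ℂ =>
      (‖t - ∑ i, (z i)^2‖) ^ (-(1+c)) :=
    (continuous_norm.measurable.comp (measurable_const.sub h1)).pow measurable_const
  have hnonneg : 0 ≤ᵐ[volume.restrict S] fun z : Fin (m+2) → ℂ =>
      (‖t - ∑ i, (z i)^2‖) ^ (-(1+c)) :=
    ae_of_all _ fun z => Real.rpow_nonneg (norm_nonneg _) _
  rw [integral_eq_lintegral_of_nonneg_ae hnonneg hmeas.aestronglyMeasurable]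
  have hbound : (∫⁻ z in S,
      ENNReal.ofReal ((‖t - ∑ i, (z i)^2‖) ^ (-(1+c)))) ≤ Ctot := by
    calc (∫⁻ z in S, ENNReal.ofReal ((‖t - ∑ i, (z i)^2‖) ^ (-(1+c))))
        ≤ ∫⁻ z in Set.pi Set.univ (fun _ : Fin (m+2) => ball (0:ℂ) 1),
          ENNReal.ofReal ((‖t - ∑ i, (z i)^2‖) ^ (-(1+c))) :=
        lintegral_mono' (Measure.restrict_mono hsub le_rfl) le_rfl
      _ ≤ K * V ^ m := hKb m t
  calc (∫⁻ z in S,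
      ENNReal.ofReal ((‖t - ∑ i, (z i)^2‖) ^ (-(1+c)))).toReal
      ≤ Ctot.toReal := ENNReal.toReal_mono hCtotfin hbound
    _ ≤ Ctot.toReal + 1 := by linarith
end

section
/- Let M be a complex space with a ℂ*-action fixing a point 0 ∈ M, and let f = h·g where h is a nowhere-vanishing holomorphic function near 0 and g is a ℂ*-equivariant holomorphic function of degree d (i.e., g(t·z) = t^d g(z)). Then there exists a holomorphic map F : M → M which is biholomorphic near 0 such that f ∘ F = g. -/
open Set

open Metric

private lemma aux_pow_sub (a b : ℂ) (β : ℝ) (ha : ‖a‖ ≤ β) (hb : ‖b‖ ≤ β) (n : ℕ) :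
    ‖a ^ n - b ^ n‖ ≤ n * β ^ (n - 1) * ‖a - b‖ := by
  have hβ0 : 0 ≤ β := le_trans (norm_nonneg a) ha
  induction n with
  | zero => simp
  | succ n ih =>
    have key : a ^ (n + 1) - b ^ (n + 1) = a ^ n * (a - b) + (a ^ n - b ^ n) * b := by ring
    have h1 : ‖a ^ n * (a - b)‖ ≤ β ^ n * ‖a - b‖ := by
      rw [norm_mul, norm_pow]
      gcongr
    have h2 : ‖(a ^ n - b ^ n) * b‖ ≤ (n * β ^ (n - 1) * ‖a - b‖) * β := by
      rw [norm_mul]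
      have := mul_le_mul ih hb (norm_nonneg b) (by positivity)
      linarith
    have h3 : (n : ℝ) * β ^ (n - 1) * ‖a - b‖ * β ≤ n * β ^ n * ‖a - b‖ := by
      rcases Nat.eq_zero_or_pos n with rfl | hn
      · simp
      · have hss : β ^ (n - 1) * β = β ^ n := by
          rw [← pow_succ, Nat.sub_add_cancel hn]
        refine le_of_eq ?_
        rw [← hss]; ring
    calc ‖a ^ (n + 1) - b ^ (n + 1)‖ ≤ ‖a ^ n * (a - b)‖ + ‖(a ^ n - b ^ n) * b‖ := by
          rw [key]; exact norm_add_le _ _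
    _ ≤ β ^ n * ‖a - b‖ + n * β ^ n * ‖a - b‖ := by linarith
    _ ≤ (n + 1 : ℕ) * β ^ ((n + 1) - 1) * ‖a - b‖ := by
        simp only [Nat.add_sub_cancel]
        push_cast
        nlinarith [norm_nonneg (a - b)]

private lemma aux_lip {m : ℕ} {φ : (Fin m → ℂ) → ℂ} {Ω : Set (Fin m → ℂ)}
    (hΩ : Ω ∈ nhds (0 : Fin m → ℂ)) (hφ : DifferentiableOn ℂ φ Ω) :
    ∃ r > (0:ℝ), ∃ K : ℝ, 0 ≤ K ∧ closedBall (0 : Fin m → ℂ) r ⊆ Ω ∧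
      ∀ x ∈ closedBall (0 : Fin m → ℂ) r, ∀ y ∈ closedBall (0 : Fin m → ℂ) r,
        ‖φ x - φ y‖ ≤ K * ‖x - y‖ := by
  obtain ⟨ε, hε, hsub⟩ := nhds_basis_closedBall.mem_iff.mp hΩ
  set R : ℝ := ε / 4 with hR
  have hR0 : 0 < R := by positivity
  have hsub4 : closedBall (0 : Fin m → ℂ) (4 * R) ⊆ Ω := by
    have h4 : 4 * R = ε := by rw [hR]; ring
    rw [h4]; exact hsub
  obtain ⟨M, hM⟩ := (isCompact_closedBall (0 : Fin m → ℂ) (4 * R)).exists_bound_of_continuousOn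
    (hφ.continuousOn.mono hsub4)
  have hM0 : 0 ≤ M :=
    le_trans (norm_nonneg _) (hM 0 (by rw [mem_closedBall_zero_iff]; simp; positivity))
  refine ⟨R, hR0, m * ((2 * M + 1) / (3 * R)), by positivity,
    fun x hx => hsub4 (by
      rw [mem_closedBall_zero_iff] at hx ⊢
      nlinarith), ?_⟩
  intro x hx y hy
  rw [mem_closedBall_zero_iff] at hx hy
  classical
  set Q : ℕ → (Fin m → ℂ) := fun k i => if (i : ℕ) < k then y i else x i with hQ
  have hQ0 : Q 0 = x := by funext i; simp [hQ]
  have hQm : Q m = y := by funext i; simp [hQ, i.isLt]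
  have hQmem : ∀ k, Q k ∈ closedBall (0 : Fin m → ℂ) R := by
    intro k
    rw [mem_closedBall_zero_iff]
    refine (pi_norm_le_iff_of_nonneg hR0.le).mpr fun i => ?_
    by_cases hik : (i : ℕ) < k
    · simp only [hQ, if_pos hik]; exact le_trans (norm_le_pi_norm y i) hy
    · simp only [hQ, if_neg hik]; exact le_trans (norm_le_pi_norm x i) hx
  have step : ∀ k : ℕ, k < m →
      dist (φ (Q k)) (φ (Q (k + 1))) ≤ (2 * M + 1) / (3 * R) * ‖x - y‖ := by
    intro k hk
    set j : Fin m := ⟨k, hk⟩ with hj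
    have hQsucc : Q (k + 1) = Function.update (Q k) j (y j) := by
      funext i
      by_cases hij : i = j
      · rw [hij, Function.update_self]
        simp [hQ, hj]
      · have hij' : (i : ℕ) ≠ k := fun hc => hij (Fin.ext hc)
        have hlt : ((i : ℕ) < k + 1) ↔ ((i : ℕ) < k) := by omega
        simp [hQ, Function.update_of_ne hij, hlt]
    have hQkj : Q k j = x j := by simp [hQ, hj]
    set ψ : ℂ → ℂ := fun t => φ (Function.update (Q k) j t) with hψ
    have hupd : ∀ t : ℂ, t ∈ ball (x j) (3 * R) →
        Function.update (Q k) j t ∈ closedBall (0 : Fin m → ℂ) (4 * R) := by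
      intro t ht
      rw [mem_ball, dist_eq_norm] at ht
      rw [mem_closedBall_zero_iff]
      refine (pi_norm_le_iff_of_nonneg (by positivity)).mpr fun i => ?_
      by_cases hij : i = j
      · rw [hij, Function.update_self]
        have h1 : ‖x j‖ ≤ R := le_trans (norm_le_pi_norm x j) hx
        have h2 : ‖t‖ ≤ ‖t - x j‖ + ‖x j‖ := by
          simpa using norm_add_le (t - x j) (x j)
        linarith
      · rw [Function.update_of_ne hij]
        have := mem_closedBall_zero_iff.mp (hQmem k)
        exact le_trans (norm_le_pi_norm (Q k) i) (by linarith)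
    have hudiffOn : DifferentiableOn ℂ (fun t : ℂ => Function.update (Q k) j t)
        (ball (x j) (3 * R)) := by
      intro t ht
      refine differentiableWithinAt_pi.mpr fun i => ?_
      by_cases hij : i = j
      · subst hij
        simp only [Function.update_self]
        exact differentiableWithinAt_id
      · simp only [Function.update_of_ne hij]
        exact differentiableWithinAt_const _
    have hψdiff : DifferentiableOn ℂ ψ (ball (x j) (3 * R)) :=
      hφ.comp hudiffOn fun t ht => hsub4 (hupd t ht)
    have hc : ψ (x j) = φ (Q k) := by
      rw [hψ]
      simp only []
      rw [← hQkj, Function.update_eq_self]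
    have hmaps : MapsTo ψ (ball (x j) (3 * R)) (ball (ψ (x j)) (2 * M + 1)) := by
      intro t ht
      rw [mem_ball, dist_eq_norm]
      have hb1 : ‖ψ t‖ ≤ M := hM _ (hupd t ht)
      have hb2 : ‖ψ (x j)‖ ≤ M := by
        rw [hc]
        exact hM _ (closedBall_subset_closedBall (by linarith) (hQmem k))
      calc ‖ψ t - ψ (x j)‖ ≤ ‖ψ t‖ + ‖ψ (x j)‖ := norm_sub_le _ _
      _ ≤ 2 * M := by linarith
      _ < 2 * M + 1 := by linarith
    have hyj : y j ∈ ball (x j) (3 * R) := by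
      rw [mem_ball, dist_eq_norm]
      have h1 : ‖y j‖ ≤ R := le_trans (norm_le_pi_norm y j) hy
      have h2 : ‖x j‖ ≤ R := le_trans (norm_le_pi_norm x j) hx
      calc ‖y j - x j‖ ≤ ‖y j‖ + ‖x j‖ := norm_sub_le _ _
      _ ≤ 2 * R := by linarith
      _ < 3 * R := by linarith
    have := Complex.dist_le_div_mul_dist_of_mapsTo_ball hψdiff (hmaps.mono_right ball_subset_closedBall) hyj
    have hψy : ψ (y j) = φ (Q (k + 1)) := by rw [hψ, hQsucc]
    have hdd : dist (y j) (x j) ≤ ‖x - y‖ := by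
      rw [dist_comm]
      calc dist (x j) (y j) ≤ dist x y := dist_le_pi_dist x y j
      _ = ‖x - y‖ := dist_eq_norm x y
    calc dist (φ (Q k)) (φ (Q (k + 1))) = dist (ψ (y j)) (ψ (x j)) := by
          rw [hc, hψy, dist_comm]
    _ ≤ (2 * M + 1) / (3 * R) * dist (y j) (x j) := this
    _ ≤ (2 * M + 1) / (3 * R) * ‖x - y‖ := by
        have : (0:ℝ) ≤ (2 * M + 1) / (3 * R) := by positivity
        exact mul_le_mul_of_nonneg_left hdd this
  have tele : dist (φ x) (φ y) ≤ m * ((2 * M + 1) / (3 * R) * ‖x - y‖) := by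
    calc dist (φ x) (φ y) = dist (φ (Q 0)) (φ (Q m)) := by rw [hQ0, hQm]
    _ ≤ ∑ k ∈ Finset.range m, dist (φ (Q k)) (φ (Q (k + 1))) :=
        dist_le_range_sum_dist (fun k => φ (Q k)) m
    _ ≤ ∑ _k ∈ Finset.range m, (2 * M + 1) / (3 * R) * ‖x - y‖ := by
        refine Finset.sum_le_sum fun k hk => step k (Finset.mem_range.mp hk)
    _ = m * ((2 * M + 1) / (3 * R) * ‖x - y‖) := by
        rw [Finset.sum_const, Finset.card_range]; simp [nsmul_eq_mul]
  calc ‖φ x - φ y‖ = dist (φ x) (φ y) := (dist_eq_norm _ _).symm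
  _ ≤ m * ((2 * M + 1) / (3 * R) * ‖x - y‖) := tele
  _ = m * ((2 * M + 1) / (3 * R)) * ‖x - y‖ := by ring

set_option maxHeartbeats 2000000 in
/-- Lemma cy11 of the paper: let `M ⊆ ℂᵐ` be invariant under a `ℂ*`-action fixing
`0` (realized as a weighted scaling action `ρ_t(z) = (t^{w₁}z₁, …, t^{wₘ}zₘ)`),
and let `f = h·g` where `h` is holomorphic and nowhere vanishing near `0` and `g`
is `ℂ*`-equivariant of degree `d` (`g(ρ_t z) = t^d g(z)`).  Then there is a
holomorphic map `F : M → M`, biholomorphic near `0`, with `f ∘ F = g` near `0`. -/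
theorem stmt14 (m : ℕ) (w : Fin m → ℕ) (hw : ∀ i, 0 < w i)
    (M : Set (Fin m → ℂ))
    (ρ : ℂ → (Fin m → ℂ) → (Fin m → ℂ))
    (hρ : ∀ t z i, ρ t z i = t ^ (w i) * z i)
    (hMinv : ∀ (t : ℂ), t ≠ 0 → ∀ z ∈ M, ρ t z ∈ M)
    (h0 : (0 : Fin m → ℂ) ∈ M)
    (d : ℕ) (hd : 0 < d)
    (g : (Fin m → ℂ) → ℂ)
    (hg : ∀ (t : ℂ), t ≠ 0 → ∀ z ∈ M, g (ρ t z) = t ^ d * g z)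
    (h : (Fin m → ℂ) → ℂ)
    (W : Set (Fin m → ℂ)) (hW : W ∈ nhds (0 : Fin m → ℂ))
    (hghol : DifferentiableOn ℂ g W)
    (hh : DifferentiableOn ℂ h W) (hh0 : ∀ z ∈ W, h z ≠ 0)
    (f : (Fin m → ℂ) → ℂ) (hfhg : ∀ z ∈ W, f z = h z * g z) :
    ∃ U ∈ nhds (0 : Fin m → ℂ), ∃ F : (Fin m → ℂ) → (Fin m → ℂ),
      DifferentiableOn ℂ F U ∧ Set.MapsTo F (U ∩ M) M ∧
      (∃ V ∈ nhds (0 : Fin m → ℂ), ∃ G : (Fin m → ℂ) → (Fin m → ℂ),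
        DifferentiableOn ℂ G V ∧ Set.MapsTo G (V ∩ M) (U ∩ M) ∧
        (∀ z ∈ U ∩ M, G (F z) = z) ∧ ∀ z ∈ V ∩ M, F (G z) = z) ∧
      ∀ z ∈ U ∩ M, f (F z) = g z := by
  classical
  have h0W : (0 : Fin m → ℂ) ∈ W := mem_of_mem_nhds hW
  have hh00 : h 0 ≠ 0 := hh0 0 h0W
  obtain ⟨c, hcd⟩ := IsAlgClosed.exists_pow_nat_eq (h 0) hd
  have hc0 : c ≠ 0 := by
    intro hc; exact hh00 (by rw [← hcd, hc, zero_pow hd.ne'])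
  -- the open set where the root is defined
  set S : Set (Fin m → ℂ) := interior W ∩ h ⁻¹' ((· / h 0) ⁻¹' Complex.slitPlane) with hSdef
  have hSopen : IsOpen S :=
    ContinuousOn.isOpen_inter_preimage (hh.continuousOn.mono interior_subset) isOpen_interior
      (Complex.isOpen_slitPlane.preimage (continuous_id.div_const _))
  have hSW : S ⊆ W := fun z hz => interior_subset hz.1
  have h0S : (0 : Fin m → ℂ) ∈ S := by
    refine ⟨mem_interior_iff_mem_nhds.mpr hW, ?_⟩
    simp only [mem_preimage, div_self hh00]
    exact Complex.one_mem_slitPlane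
  -- the d-th root of h
  set u : (Fin m → ℂ) → ℂ := fun z => c * Complex.exp (Complex.log (h z / h 0) / d) with hudef
  have hu0 : ∀ z, u z ≠ 0 := fun z => mul_ne_zero hc0 (Complex.exp_ne_zero _)
  have hu_at0 : u 0 = c := by
    rw [hudef]; simp [div_self hh00, Complex.log_one]
  have hudiff : DifferentiableOn ℂ u S := by
    intro z hz
    have h1 : DifferentiableWithinAt ℂ h S z := (hh z (hSW hz)).mono hSW
    have h2 : DifferentiableWithinAt ℂ (fun t => h t / h 0) S z := by
      simp only [div_eq_mul_inv]
      exact DifferentiableWithinAt.mul_const (𝕜 := ℂ) (𝔸 := ℂ) h1 ((h 0)⁻¹)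
    have h3 : DifferentiableWithinAt ℂ (fun t => Complex.log (h t / h 0)) S z :=
      h2.clog hz.2
    have h4 : DifferentiableWithinAt ℂ (fun t => Complex.log (h t / h 0) / (d : ℂ)) S z := by
      simp only [div_eq_mul_inv]
      exact DifferentiableWithinAt.mul_const (𝕜 := ℂ) (𝔸 := ℂ) h3 (((d : ℂ))⁻¹)
    exact (h4.cexp).const_mul _
  have hupow : ∀ z ∈ S, u z ^ d = h z := by
    intro z hz
    have hz0 : h z / h 0 ≠ 0 := div_ne_zero (hh0 z (hSW hz)) hh00
    have hdc : (d : ℂ) ≠ 0 := Nat.cast_ne_zero.mpr hd.ne'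
    have hmul : (d : ℂ) * (Complex.log (h z / h 0) / d) = Complex.log (h z / h 0) := by
      field_simp
    rw [hudef]
    simp only []
    rw [mul_pow, ← Complex.exp_nat_mul, hmul, Complex.exp_log hz0, hcd]
    field_simp
  -- the equivariant chart G
  set G : (Fin m → ℂ) → (Fin m → ℂ) := fun z i => u z ^ w i * z i with hGdef
  have hGρ : ∀ z, G z = ρ (u z) z := by intro z; funext i; rw [hρ]
  have hG0 : G 0 = (0 : Fin m → ℂ) := by funext i; simp [hGdef]
  have hGdiffS : DifferentiableOn ℂ G S := by
    intro z hz
    refine differentiableWithinAt_pi.mpr fun i => ?_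
    exact ((hudiff z hz).pow _).mul
      ((ContinuousLinearMap.proj i : (Fin m → ℂ) →L[ℂ] ℂ).differentiable.differentiableAt.differentiableWithinAt)
  -- Lipschitz estimates for u
  obtain ⟨r1, hr1, K, hK0, hball_sub, hlipu⟩ := aux_lip (hSopen.mem_nhds h0S) hudiff
  set β : ℝ := ‖c‖ + K * r1 + 1 with hβ
  have hβ1 : (1 : ℝ) ≤ β := by
    have e1 := norm_nonneg c
    have e2 := mul_nonneg hK0 hr1.le
    rw [hβ]; linarith
  have hβ0 : (0 : ℝ) < β := lt_of_lt_of_le one_pos hβ1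
  have hubound : ∀ z ∈ closedBall (0 : Fin m → ℂ) r1, ‖u z‖ ≤ β := by
    intro z hz
    have h1 : ‖u z - u 0‖ ≤ K * ‖z - 0‖ :=
      hlipu z hz 0 (mem_closedBall_self hr1.le)
    have h2 : ‖z - 0‖ ≤ r1 := by
      rw [sub_zero]; exact mem_closedBall_zero_iff.mp hz
    have h3 : ‖u z‖ ≤ ‖u z - u 0‖ + ‖u 0‖ := by
      simpa using norm_add_le (u z - u 0) (u 0)
    have h4 : K * ‖z - 0‖ ≤ K * r1 := mul_le_mul_of_nonneg_left h2 hK0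
    rw [hu_at0] at h1 h3
    rw [hβ]; linarith
  set wm : ℕ := Finset.univ.sup w with hwm
  set κ : ℝ := ((wm : ℝ) + 1) * β ^ wm * K with hκ
  have hκ0 : (0 : ℝ) ≤ κ := by
    have : (0:ℝ) ≤ β ^ wm := pow_nonneg hβ0.le _
    have : (0:ℝ) ≤ ((wm : ℝ) + 1) * β ^ wm := by positivity
    rw [hκ]; exact mul_nonneg this hK0
  have hpowlip : ∀ i : Fin m, ∀ x ∈ closedBall (0 : Fin m → ℂ) r1,
      ∀ y ∈ closedBall (0 : Fin m → ℂ) r1, ‖u x ^ w i - u y ^ w i‖ ≤ κ * ‖x - y‖ := by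
    intro i x hx y hy
    have h1 := aux_pow_sub (u x) (u y) β (hubound x hx) (hubound y hy) (w i)
    have h2 : ‖u x - u y‖ ≤ K * ‖x - y‖ := hlipu x hx y hy
    have hwi : w i ≤ wm := Finset.le_sup (Finset.mem_univ i)
    have h3 : (w i : ℝ) * β ^ (w i - 1) ≤ ((wm : ℝ) + 1) * β ^ wm := by
      have hp : β ^ (w i - 1) ≤ β ^ wm := pow_le_pow_right₀ hβ1 (by omega)
      have h4 : (w i : ℝ) ≤ (wm : ℝ) + 1 := by exact_mod_cast Nat.le_succ_of_le hwi
      have hp0 : (0:ℝ) ≤ β ^ (w i - 1) := pow_nonneg hβ0.le _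
      have hw0 : (0:ℝ) ≤ (w i : ℝ) := Nat.cast_nonneg _
      nlinarith
    calc ‖u x ^ w i - u y ^ w i‖ ≤ (w i : ℝ) * β ^ (w i - 1) * ‖u x - u y‖ := h1
    _ ≤ (((wm : ℝ) + 1) * β ^ wm) * (K * ‖x - y‖) := by
        refine mul_le_mul h3 h2 (norm_nonneg _) ?_
        positivity
    _ = κ * ‖x - y‖ := by rw [hκ]; ring
  -- the invertible derivative of G at 0
  set D0 : (Fin m → ℂ) ≃L[ℂ] (Fin m → ℂ) :=
    LinearEquiv.toContinuousLinearEquiv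
      (LinearEquiv.piCongrRight (fun i => LinearEquiv.smulOfNeZero ℂ ℂ (c ^ w i)
        (pow_ne_zero _ hc0))) with hD0
  have hD0ap : ∀ (v : Fin m → ℂ) (i : Fin m),
      (D0 : (Fin m → ℂ) →L[ℂ] (Fin m → ℂ)) v i = c ^ w i * v i := fun v i => rfl
  have hstrict : HasStrictFDerivAt G (↑D0 : (Fin m → ℂ) →L[ℂ] (Fin m → ℂ)) 0 := by
    refine HasStrictFDerivAt.of_isLittleO (Asymptotics.isLittleO_iff.mpr ?_)
    intro ε hε
    set δ : ℝ := min r1 (ε / (2 * κ + 1)) with hδdef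
    have hδ0 : 0 < δ := lt_min hr1 (by positivity)
    have hδr1 : δ ≤ r1 := min_le_left _ _
    have hδε : δ ≤ ε / (2 * κ + 1) := min_le_right _ _
    have hmem : closedBall (0 : Fin m → ℂ) δ ×ˢ closedBall (0 : Fin m → ℂ) δ ∈
        nhds ((0 : Fin m → ℂ), (0 : Fin m → ℂ)) := by
      rw [nhds_prod_eq]
      exact Filter.prod_mem_prod (closedBall_mem_nhds _ hδ0) (closedBall_mem_nhds _ hδ0)
    filter_upwards [hmem] with p hp
    obtain ⟨hp1, hp2⟩ := hp
    have hp1r : p.1 ∈ closedBall (0 : Fin m → ℂ) r1 :=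
      closedBall_subset_closedBall hδr1 hp1
    have hp2r : p.2 ∈ closedBall (0 : Fin m → ℂ) r1 :=
      closedBall_subset_closedBall hδr1 hp2
    have hn1 : ‖p.1‖ ≤ δ := mem_closedBall_zero_iff.mp hp1
    have hn2 : ‖p.2‖ ≤ δ := mem_closedBall_zero_iff.mp hp2
    refine (pi_norm_le_iff_of_nonneg (by positivity)).mpr fun i => ?_
    rw [Pi.sub_apply, Pi.sub_apply, hD0ap, Pi.sub_apply]
    simp only [hGdef]
    have hb1 : ‖u p.1 ^ w i - c ^ w i‖ ≤ κ * δ := by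
      have hq := hpowlip i p.1 hp1r 0 (mem_closedBall_self hr1.le)
      rw [hu_at0, sub_zero] at hq
      calc ‖u p.1 ^ w i - c ^ w i‖ ≤ κ * ‖p.1‖ := hq
      _ ≤ κ * δ := mul_le_mul_of_nonneg_left hn1 hκ0
    have hb2 : ‖u p.1 ^ w i - u p.2 ^ w i‖ ≤ κ * ‖p.1 - p.2‖ := hpowlip i p.1 hp1r p.2 hp2r
    have hb3 : ‖p.1 i - p.2 i‖ ≤ ‖p.1 - p.2‖ := by
      have hq := norm_le_pi_norm (p.1 - p.2) i
      rwa [Pi.sub_apply] at hq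
    have hb4 : ‖p.2 i‖ ≤ δ := le_trans (norm_le_pi_norm p.2 i) hn2
    have hfin : 2 * κ * δ ≤ ε := by
      have h1 : 2 * κ * δ ≤ 2 * κ * (ε / (2 * κ + 1)) :=
        mul_le_mul_of_nonneg_left hδε (by positivity)
      have h3 : (2 * κ) * (ε / (2 * κ + 1)) ≤ ε := by
        rw [mul_comm, div_mul_eq_mul_div, div_le_iff₀ (by positivity : (0:ℝ) < 2 * κ + 1)]
        nlinarith
      linarith
    calc ‖u p.1 ^ w i * p.1 i - u p.2 ^ w i * p.2 i - c ^ w i * (p.1 i - p.2 i)‖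
        = ‖(u p.1 ^ w i - c ^ w i) * (p.1 i - p.2 i)
            + (u p.1 ^ w i - u p.2 ^ w i) * p.2 i‖ := by ring_nf
    _ ≤ ‖(u p.1 ^ w i - c ^ w i) * (p.1 i - p.2 i)‖
            + ‖(u p.1 ^ w i - u p.2 ^ w i) * p.2 i‖ := norm_add_le _ _
    _ ≤ (κ * δ) * ‖p.1 - p.2‖ + (κ * ‖p.1 - p.2‖) * δ := by
          rw [norm_mul, norm_mul]
          exact add_le_add (mul_le_mul hb1 hb3 (norm_nonneg _) (by positivity))
            (mul_le_mul hb2 hb4 (norm_nonneg _) (by positivity))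
    _ = (2 * κ * δ) * ‖p.1 - p.2‖ := by ring
    _ ≤ ε * ‖p.1 - p.2‖ := mul_le_mul_of_nonneg_right hfin (norm_nonneg _)
  -- the partial homeomorphism given by the inverse function theorem
  set P : OpenPartialHomeomorph (Fin m → ℂ) (Fin m → ℂ) :=
    HasStrictFDerivAt.toOpenPartialHomeomorph G hstrict with hPdef
  have hPcoe : ⇑P = G := hstrict.toOpenPartialHomeomorph_coe
  have h0src : (0 : Fin m → ℂ) ∈ P.source := hstrict.mem_toOpenPartialHomeomorph_source
  have h0tgt : (0 : Fin m → ℂ) ∈ P.target := by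
    have hq := P.map_source h0src
    rwa [hPcoe, hG0] at hq
  have hsymm0 : P.symm 0 = 0 := by
    have hq := P.left_inv h0src
    rwa [hPcoe, hG0] at hq
  -- radius on which the derivative of G is invertible
  have hcpos : (0:ℝ) < ‖c‖ := norm_pos_iff.mpr hc0
  set C2 : ℝ := ((wm : ℝ) + 1) * (2 / ‖c‖) * K with hC2
  have hC20 : 0 ≤ C2 := by
    have : (0:ℝ) ≤ ((wm : ℝ) + 1) * (2 / ‖c‖) := by positivity
    exact mul_nonneg this hK0
  set r3 : ℝ := min (min r1 (‖c‖ / (2 * K + 1))) (1 / (C2 + 1)) with hr3def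
  have hr30 : 0 < r3 := lt_min (lt_min hr1 (by positivity)) (by positivity)
  have hr31 : r3 ≤ r1 := le_trans (min_le_left _ _) (min_le_left _ _)
  have hr3K : r3 ≤ ‖c‖ / (2 * K + 1) := le_trans (min_le_left _ _) (min_le_right _ _)
  have hr3C : r3 ≤ 1 / (C2 + 1) := min_le_right _ _
  have hball_r3 : ball (0 : Fin m → ℂ) r3 ⊆ closedBall (0 : Fin m → ℂ) r1 := fun z hz => by
    rw [mem_closedBall_zero_iff]
    rw [mem_ball, dist_zero_right] at hz
    linarith
  have hball_r3S : ball (0 : Fin m → ℂ) r3 ⊆ S := fun z hz => hball_sub (hball_r3 hz)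
  have hu_low : ∀ x ∈ ball (0 : Fin m → ℂ) r3, ‖c‖ / 2 ≤ ‖u x‖ := by
    intro x hx
    have hx1 : x ∈ closedBall (0 : Fin m → ℂ) r1 := hball_r3 hx
    have h1 : ‖u x - u 0‖ ≤ K * ‖x - 0‖ := hlipu x hx1 0 (mem_closedBall_self hr1.le)
    rw [hu_at0, sub_zero] at h1
    have hn : ‖x‖ < r3 := by rwa [mem_ball, dist_zero_right] at hx
    have h2 : K * ‖x‖ ≤ K * (‖c‖ / (2 * K + 1)) :=
      mul_le_mul_of_nonneg_left (le_trans hn.le hr3K) hK0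
    have h3 : K * (‖c‖ / (2 * K + 1)) ≤ ‖c‖ / 2 := by
      rw [mul_comm, div_mul_eq_mul_div, div_le_div_iff₀ (by positivity) (by norm_num : (0:ℝ) < 2)]
      nlinarith
    have h4 : ‖c‖ - ‖u x‖ ≤ ‖u x - c‖ := by
      have hq := norm_sub_norm_le c (u x)
      rwa [norm_sub_rev] at hq
    linarith
  -- invertibility of the derivative of G on the small ball
  have hinv : ∀ x ∈ ball (0 : Fin m → ℂ) r3,
      ∃ eqA : (Fin m → ℂ) ≃L[ℂ] (Fin m → ℂ),
        HasFDerivAt G (↑eqA : (Fin m → ℂ) →L[ℂ] (Fin m → ℂ)) x := by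
    intro x hx
    have hxS : x ∈ S := hball_r3S hx
    have hxcb : x ∈ closedBall (0 : Fin m → ℂ) r1 := hball_r3 hx
    have hxn : ‖x‖ < r3 := by rwa [mem_ball, dist_zero_right] at hx
    have hudx : DifferentiableAt ℂ u x := (hudiff.differentiableAt (hSopen.mem_nhds hxS))
    set L : (Fin m → ℂ) →L[ℂ] ℂ := fderiv ℂ u x with hLdef
    have hL : HasFDerivAt u L x := hudx.hasFDerivAt
    have hcb_nhds : closedBall (0 : Fin m → ℂ) r1 ∈ nhds x :=
      mem_nhds_iff.mpr ⟨ball (0 : Fin m → ℂ) r1, ball_subset_closedBall, isOpen_ball,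
        by rw [mem_ball, dist_zero_right]; linarith⟩
    have hlipu' : LipschitzOnWith K.toNNReal u (closedBall (0 : Fin m → ℂ) r1) := by
      refine LipschitzOnWith.of_dist_le_mul fun a ha b hb => ?_
      rw [Real.coe_toNNReal K hK0, dist_eq_norm, dist_eq_norm]
      exact hlipu a ha b hb
    have hLK : ‖L‖ ≤ K := by
      have := hL.le_of_lipschitzOn hcb_nhds hlipu'
      rwa [Real.coe_toNNReal K hK0] at this
    set A : (Fin m → ℂ) →L[ℂ] (Fin m → ℂ) :=
      ContinuousLinearMap.pi (fun i => (u x ^ w i) • ContinuousLinearMap.proj i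
        + (x i) • (((w i : ℂ) * u x ^ (w i - 1)) • L)) with hAdef
    have hGA : HasFDerivAt G A x := by
      refine hasFDerivAt_pi'' fun i => ?_
      rw [hAdef, ContinuousLinearMap.proj_pi]
      have hpow : HasFDerivAt (fun z => u z ^ w i)
          (((w i : ℂ) * u x ^ (w i - 1)) • L) x :=
        (hasDerivAt_pow (w i) (u x)).comp_hasFDerivAt x hL
      exact hpow.mul (hasFDerivAt_apply i x)
    set N : (Fin m → ℂ) →L[ℂ] (Fin m → ℂ) :=
      ContinuousLinearMap.pi (fun i => ((x i) * (w i : ℂ) / u x) • L) with hNdef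
    have hNnorm : ‖N‖ < 1 := by
      have hb : ∀ v, ‖N v‖ ≤ (C2 * r3) * ‖v‖ := by
        intro v
        refine (pi_norm_le_iff_of_nonneg (by positivity)).mpr fun i => ?_
        have happ : N v i = ((x i) * (w i : ℂ) / u x) * L v := rfl
        rw [happ, norm_mul]
        have h1 : ‖L v‖ ≤ K * ‖v‖ :=
          le_trans (L.le_opNorm v) (mul_le_mul_of_nonneg_right hLK (norm_nonneg v))
        have h2 : ‖(x i) * (w i : ℂ) / u x‖ ≤ r3 * ((wm : ℝ) + 1) * (2 / ‖c‖) := by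
          rw [norm_div, norm_mul, Complex.norm_natCast]
          have hxi : ‖x i‖ ≤ r3 := le_trans (norm_le_pi_norm x i) hxn.le
          have hwi : (w i : ℝ) ≤ (wm : ℝ) + 1 :=
            by exact_mod_cast Nat.le_succ_of_le (Finset.le_sup (Finset.mem_univ i))
          have hux : ‖c‖ / 2 ≤ ‖u x‖ := hu_low x hx
          have hux0 : (0:ℝ) < ‖u x‖ := lt_of_lt_of_le (by positivity) hux
          rw [div_le_iff₀ hux0]
          have hstep : ‖x i‖ * (w i : ℝ) ≤ r3 * ((wm : ℝ) + 1) :=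
            mul_le_mul hxi hwi (Nat.cast_nonneg _) hr30.le
          have h2c : r3 * ((wm : ℝ) + 1) * (2 / ‖c‖) * ‖u x‖
              ≥ r3 * ((wm : ℝ) + 1) * (2 / ‖c‖) * (‖c‖ / 2) := by
            refine mul_le_mul_of_nonneg_left hux (by positivity)
          have hone : (2 / ‖c‖) * (‖c‖ / 2) = 1 := by
            rw [div_mul_div_comm, mul_comm 2 ‖c‖]
            exact div_self (ne_of_gt (by positivity))
          have h2d : r3 * ((wm : ℝ) + 1) * (2 / ‖c‖) * (‖c‖ / 2)
              = r3 * ((wm : ℝ) + 1) := by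
            calc r3 * ((wm : ℝ) + 1) * (2 / ‖c‖) * (‖c‖ / 2)
                = r3 * ((wm : ℝ) + 1) * ((2 / ‖c‖) * (‖c‖ / 2)) := by ring
            _ = r3 * ((wm : ℝ) + 1) := by rw [hone, mul_one]
          linarith
        calc ‖(x i) * (w i : ℂ) / u x‖ * ‖L v‖
            ≤ (r3 * ((wm : ℝ) + 1) * (2 / ‖c‖)) * (K * ‖v‖) := by
              refine mul_le_mul h2 h1 (norm_nonneg _) (by positivity)
        _ = (C2 * r3) * ‖v‖ := by rw [hC2]; ring
      have hNle : ‖N‖ ≤ C2 * r3 := ContinuousLinearMap.opNorm_le_bound N (by positivity) hb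
      have : C2 * r3 ≤ C2 * (1 / (C2 + 1)) := mul_le_mul_of_nonneg_left hr3C hC20
      have hlt : C2 * (1 / (C2 + 1)) < 1 := by
        rw [mul_one_div, div_lt_one (by positivity)]
        linarith
      linarith
    set Δ : (Fin m → ℂ) ≃L[ℂ] (Fin m → ℂ) :=
      LinearEquiv.toContinuousLinearEquiv
        (LinearEquiv.piCongrRight (fun i => LinearEquiv.smulOfNeZero ℂ ℂ (u x ^ w i)
          (pow_ne_zero _ (hu0 x)))) with hΔdef
    set unit1 : ((Fin m → ℂ) →L[ℂ] (Fin m → ℂ))ˣ :=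
      Units.oneSub (-N) (by rwa [norm_neg]) with hunit1
    set uu : ((Fin m → ℂ) →L[ℂ] (Fin m → ℂ))ˣ := Δ.toUnit * unit1 with huu
    have huuval : (uu : (Fin m → ℂ) →L[ℂ] (Fin m → ℂ)) = A := by
      have hval : (uu : (Fin m → ℂ) →L[ℂ] (Fin m → ℂ))
          = ((Δ : (Fin m → ℂ) →L[ℂ] (Fin m → ℂ))).comp
            (ContinuousLinearMap.id ℂ (Fin m → ℂ) + N) := by
        rw [huu]
        show ((Δ : (Fin m → ℂ) →L[ℂ] (Fin m → ℂ)) * ((1 : _) - (-N))) = _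
        rw [sub_neg_eq_add]
        rfl
      rw [hval]
      refine ContinuousLinearMap.ext fun v => funext fun i => ?_
      have hlhs : ((Δ : (Fin m → ℂ) →L[ℂ] (Fin m → ℂ)).comp
          (ContinuousLinearMap.id ℂ (Fin m → ℂ) + N)) v i
            = u x ^ w i * (v i + (x i) * (w i : ℂ) / u x * (L v)) := rfl
      have hrhs : A v i = u x ^ w i * v i + x i * (((w i : ℂ) * u x ^ (w i - 1)) * (L v)) := rfl
      rw [hlhs, hrhs]
      have hpow : u x ^ w i = u x ^ (w i - 1) * u x := by
        rw [← pow_succ, Nat.sub_add_cancel (hw i)]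
      field_simp [hu0 x]
      rw [hpow]
      ring
    refine ⟨ContinuousLinearEquiv.ofUnit uu, ?_⟩
    have hcoe : ((ContinuousLinearEquiv.ofUnit uu : (Fin m → ℂ) ≃L[ℂ] (Fin m → ℂ)) :
        (Fin m → ℂ) →L[ℂ] (Fin m → ℂ)) = (uu : (Fin m → ℂ) →L[ℂ] (Fin m → ℂ)) := rfl
    rw [hcoe, huuval]
    exact hGA
  -- the neighbourhoods
  set s0 : Set (Fin m → ℂ) := P.source ∩ ball (0 : Fin m → ℂ) r3 with hs0def
  have hs0open : IsOpen s0 := P.open_source.inter isOpen_ball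
  have h0s0 : (0 : Fin m → ℂ) ∈ s0 := ⟨h0src, mem_ball_self hr30⟩
  set U : Set (Fin m → ℂ) := P.target ∩ ⇑P.symm ⁻¹' s0 with hUdef
  have hUopen : IsOpen U := P.isOpen_inter_preimage_symm hs0open
  have h0U : (0 : Fin m → ℂ) ∈ U := ⟨h0tgt, by rw [mem_preimage, hsymm0]; exact h0s0⟩
  have hs0S : s0 ⊆ S := fun z hz => hball_r3S hz.2
  -- F := P.symm maps U ∩ M into M
  have hFmaps : Set.MapsTo (⇑P.symm) (U ∩ M) M := by
    rintro z ⟨⟨hzT, hzs⟩, hzM⟩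
    rw [mem_preimage] at hzs
    have hGx : G (P.symm z) = z := by
      have hq := P.right_inv hzT
      rwa [hPcoe] at hq
    have hx_eq : P.symm z = ρ (u (P.symm z))⁻¹ z := by
      funext i
      rw [hρ]
      have hzi : G (P.symm z) i = z i := congrFun hGx i
      rw [← hzi]
      show P.symm z i = ((u (P.symm z))⁻¹) ^ w i * (u (P.symm z) ^ w i * P.symm z i)
      rw [inv_pow, ← mul_assoc, inv_mul_cancel₀ (pow_ne_zero _ (hu0 _)), one_mul]
    rw [hx_eq]
    exact hMinv _ (inv_ne_zero (hu0 _)) z hzM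
  -- the key functional identity
  have hkey : ∀ x ∈ S, x ∈ M → f x = g (G x) := by
    intro x hxS hxM
    rw [hGρ, hg (u x) (hu0 x) x hxM, hupow x hxS]
    exact hfhg x (hSW hxS)
  refine ⟨U, hUopen.mem_nhds h0U, ⇑P.symm, ?_, hFmaps, ⟨s0, hs0open.mem_nhds h0s0, G,
    ?_, ?_, ?_, ?_⟩, ?_⟩
  · -- DifferentiableOn P.symm U
    intro b hb
    obtain ⟨hbT, hbs⟩ := hb
    rw [mem_preimage] at hbs
    obtain ⟨eqA, heqA⟩ := hinv (P.symm b) hbs.2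
    have hcont : ContinuousAt (⇑P.symm) b := P.continuousAt_symm hbT
    have hfg2 : ∀ᶠ y in nhds b, G (P.symm y) = y := by
      filter_upwards [P.open_target.mem_nhds hbT] with y hy
      have hq := P.right_inv hy
      rwa [hPcoe] at hq
    exact (HasFDerivAt.of_local_left_inverse hcont heqA hfg2).differentiableAt.differentiableWithinAt
  · -- DifferentiableOn G s0
    exact hGdiffS.mono hs0S
  · -- MapsTo G (s0 ∩ M) (U ∩ M)
    rintro z ⟨hzs0, hzM⟩
    refine ⟨⟨?_, ?_⟩, ?_⟩
    · have hq := P.map_source hzs0.1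
      rwa [hPcoe] at hq
    · rw [mem_preimage]
      have hq := P.left_inv hzs0.1
      rw [hPcoe] at hq
      rw [hq]
      exact hzs0
    · rw [hGρ]
      exact hMinv _ (hu0 z) z hzM
  · -- G (F z) = z on U ∩ M
    rintro z ⟨⟨hzT, _⟩, _⟩
    have hq := P.right_inv hzT
    rwa [hPcoe] at hq
  · -- F (G z) = z on s0 ∩ M
    rintro z ⟨hzs0, _⟩
    have hq := P.left_inv hzs0.1
    rwa [hPcoe] at hq
  · -- f (F z) = g z on U ∩ M
    rintro z ⟨⟨hzT, hzs⟩, hzM⟩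
    rw [mem_preimage] at hzs
    have hxM : P.symm z ∈ M := hFmaps ⟨⟨hzT, by rw [mem_preimage]; exact hzs⟩, hzM⟩
    have hxS : P.symm z ∈ S := hs0S hzs
    have hGx : G (P.symm z) = z := by
      have hq := P.right_inv hzT
      rwa [hPcoe] at hq
    rw [hkey _ hxS hxM, hGx]
end

section
/- Let K be a compact convex set in ℂⁿ with the Euclidean Kähler form ω₀, and let g_k be a Kähler metric on a neighborhood of K with Kähler form ω_k. Then ∫_{K × K} (length_{g_k}([x₁, x₂]))² dμ(x₁) dμ(x₂) ≤ 2^{2n} · diam_{g₀}(K)² · Vol_{g₀}(K) · ∫_K ω_k ∧ ω₀^{n−1}, where [x₁, x₂] is the straight segment joining x₁, x₂, dμ is Lebesgue measure, and g₀ the Euclidean metric. -/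
open MeasureTheory Metric Set
open scoped ENNReal

noncomputable section

instance (n : ℕ) : MeasurableSpace (EuclideanSpace ℂ (Fin n)) :=
  MeasurableSpace.comap (WithLp.ofLp (p := 2)) MeasurableSpace.pi

/-- Lebesgue measure on `ℂⁿ = EuclideanSpace ℂ (Fin n)`, transported from the
product Lebesgue measure. -/
noncomputable def lebC (n : ℕ) : Measure (EuclideanSpace ℂ (Fin n)) :=
  Measure.map (fun z : Fin n → ℂ => (WithLp.equiv 2 (Fin n → ℂ)).symm z) volume

/-- The squared `g_k`-length of a vector `v` at `z`, for the Hermitian metric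
`g_k` given by the positive-semidefinite Hermitian operator field `A`. -/
noncomputable def herm (n : ℕ)
    (A : EuclideanSpace ℂ (Fin n) → EuclideanSpace ℂ (Fin n) →L[ℂ] EuclideanSpace ℂ (Fin n))
    (z v : EuclideanSpace ℂ (Fin n)) : ℝ :=
  (inner ℂ (A z v) v : ℂ).re

/-- The trace `tr_{g₀}(g_k)` of the Hermitian metric given by `A` with respect to
the Euclidean metric. -/
noncomputable def trH (n : ℕ)
    (A : EuclideanSpace ℂ (Fin n) → EuclideanSpace ℂ (Fin n) →L[ℂ] EuclideanSpace ℂ (Fin n))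
    (z : EuclideanSpace ℂ (Fin n)) : ℝ :=
  ∑ j, herm n A z (EuclideanSpace.single j (1 : ℂ))

/-- The `g_k`-length of the straight segment `[x,y]`. -/
noncomputable def segLen (n : ℕ)
    (A : EuclideanSpace ℂ (Fin n) → EuclideanSpace ℂ (Fin n) →L[ℂ] EuclideanSpace ℂ (Fin n))
    (x y : EuclideanSpace ℂ (Fin n)) : ℝ :=
  ∫ t in (0:ℝ)..1, Real.sqrt (herm n A ((1 - t) • x + t • y) (y - x))

/- ### Auxiliary material -/

section Aux

open ComplexConjugate Finset

instance (n : ℕ) : BorelSpace (EuclideanSpace ℂ (Fin n)) := PiLp.borelSpace 2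

instance lebC_haar (n : ℕ) : (lebC n).IsAddHaarMeasure := by
  rw [lebC]
  exact (PiLp.continuousLinearEquiv 2 ℂ (fun _ : Fin n => ℂ)).symm.isAddHaarMeasure_map volume

lemma finrank_E (n : ℕ) : Module.finrank ℝ (EuclideanSpace ℂ (Fin n)) = 2 * n := by
  rw [← Module.finrank_mul_finrank ℝ ℂ (EuclideanSpace ℂ (Fin n)), Complex.finrank_real_complex,
    finrank_euclideanSpace, Fintype.card_fin]

variable {V : Type*} [NormedAddCommGroup V] [InnerProductSpace ℂ V]

local notation "⟪" x ", " y "⟫" => @inner ℂ _ _ x y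

lemma cs_psd (T : V →L[ℂ] V) (him : ∀ v, (⟪T v, v⟫).im = 0)
    (hpos : ∀ v, 0 ≤ (⟪T v, v⟫).re) (u w : V) :
    ‖⟪T u, w⟫‖ ≤ Real.sqrt ((⟪T u, u⟫).re * (⟪T w, w⟫).re) := by
  have hsymm : LinearMap.IsSymmetric (T : V →ₗ[ℂ] V) := by
    rw [LinearMap.isSymmetric_iff_inner_map_self_real]
    intro v
    rw [Complex.conj_eq_iff_im]
    exact him v
  have hconj : ∀ a b : V, ⟪T b, a⟫ = conj ⟪T a, b⟫ := by
    intro a b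
    rw [← inner_conj_symm]
    exact congrArg conj (hsymm a b).symm
  set B := ⟪T u, w⟫ with hB
  set auu := (⟪T u, u⟫).re with hauu
  set aww := (⟪T w, w⟫).re with haww
  have haww0 : 0 ≤ aww := hpos w
  have hauu0 : 0 ≤ auu := hpos u
  have key : ∀ t : ℝ,
      0 ≤ (Complex.normSq B * aww) * (t * t) + (-(2 * Complex.normSq B)) * t + auu := by
    intro t
    have h0 := hpos (u + (-(t:ℂ) * conj B) • w)
    set c : ℂ := -(t:ℂ) * conj B with hc
    have hexp : ⟪T (u + c • w), u + c • w⟫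
        = ⟪T u, u⟫ + c * B + conj (c * B) + conj c * c * ⟪T w, w⟫ := by
      rw [map_add, ContinuousLinearMap.map_smul, inner_add_left, inner_add_right, inner_add_right,
        inner_smul_left, inner_smul_right, inner_smul_left, inner_smul_right, hconj u w]
      simp only [map_mul, map_neg, Complex.conj_conj, Complex.conj_ofReal]
      ring
    rw [hexp] at h0
    have hcB : c * B = ((-(t * Complex.normSq B) : ℝ) : ℂ) := by
      rw [hc]
      rw [show -(t:ℂ) * conj B * B = -(t:ℂ) * (B * conj B) by ring, Complex.mul_conj]
      push_cast
      ring
    have hcc : conj c * c = ((t * t * Complex.normSq B : ℝ) : ℂ) := by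
      rw [hc, map_mul, map_neg, Complex.conj_conj, Complex.conj_ofReal]
      rw [show -(t:ℂ) * B * (-(t:ℂ) * conj B) = ((t:ℂ) * t) * (B * conj B) by ring,
        Complex.mul_conj]
      push_cast
      ring
    rw [hcB, hcc, Complex.conj_ofReal] at h0
    simp only [Complex.add_re, Complex.ofReal_re, Complex.re_ofReal_mul] at h0
    calc (0:ℝ) ≤ _ := h0
    _ = Complex.normSq B * aww * (t * t) + -(2 * Complex.normSq B) * t + auu := by
      rw [← hauu, ← haww]; ring
  have hd := discrim_le_zero key
  rw [discrim] at hd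
  have hsq : ‖B‖ = Real.sqrt (Complex.normSq B) := Complex.norm_def B
  rcases eq_or_lt_of_le (Complex.normSq_nonneg B) with h0 | hpos'
  · rw [hsq, ← h0]
    simp [Real.sqrt_nonneg]
  · have h1 : Complex.normSq B ≤ auu * aww := by nlinarith [hd]
    rw [hsq]
    apply Real.sqrt_le_sqrt
    linarith [h1, mul_comm auu aww]

lemma herm_le_trace {n : ℕ} (T : EuclideanSpace ℂ (Fin n) →L[ℂ] EuclideanSpace ℂ (Fin n))
    (hpos : ∀ v, 0 ≤ (⟪T v, v⟫).re)
    (hcs : ∀ u w, ‖⟪T u, w⟫‖ ≤ Real.sqrt ((⟪T u, u⟫).re * (⟪T w, w⟫).re))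
    (v : EuclideanSpace ℂ (Fin n)) :
    (⟪T v, v⟫).re ≤ (∑ j, (⟪T (EuclideanSpace.single j (1:ℂ)),
      EuclideanSpace.single j (1:ℂ)⟫).re) * ‖v‖ ^ 2 := by
  set e : Fin n → EuclideanSpace ℂ (Fin n) := fun j => EuclideanSpace.single j (1:ℂ) with he
  set a : Fin n → ℝ := fun j => (⟪T (e j), e j⟫).re with ha
  have ha0 : ∀ j, 0 ≤ a j := fun j => hpos (e j)
  have hv : v = ∑ j, v j • e j := by
    have := (EuclideanSpace.basisFun (Fin n) ℂ).sum_repr v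
    simp only [EuclideanSpace.basisFun_repr, EuclideanSpace.basisFun_apply] at this
    exact this.symm
  have hexp : ⟪T v, v⟫ = ∑ j, ∑ k, conj (v j) * v k * ⟪T (e j), e k⟫ := by
    conv_lhs => rw [hv, map_sum, sum_inner]
    refine Finset.sum_congr rfl fun j _ => ?_
    rw [ContinuousLinearMap.map_smul, inner_smul_left]
    conv_lhs => rw [hv, inner_sum]
    rw [Finset.mul_sum]
    refine Finset.sum_congr rfl fun k _ => ?_
    rw [inner_smul_right, ← hv]; ring
  have step : (⟪T v, v⟫).re ≤ ∑ j, ∑ k,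
      (‖v j‖ * Real.sqrt (a j)) * (‖v k‖ * Real.sqrt (a k)) := by
    rw [hexp, Complex.re_sum]
    refine Finset.sum_le_sum fun j _ => ?_
    rw [Complex.re_sum]
    refine Finset.sum_le_sum fun k _ => ?_
    calc (conj (v j) * v k * ⟪T (e j), e k⟫).re
        ≤ ‖conj (v j) * v k * ⟪T (e j), e k⟫‖ := Complex.re_le_norm _
      _ = ‖v j‖ * ‖v k‖ * ‖⟪T (e j), e k⟫‖ := by
          rw [norm_mul, norm_mul, Complex.norm_conj]
      _ ≤ ‖v j‖ * ‖v k‖ * (Real.sqrt (a j) * Real.sqrt (a k)) := by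
          refine mul_le_mul_of_nonneg_left ?_ (by positivity)
          rw [← Real.sqrt_mul (ha0 j)]
          exact hcs (e j) (e k)
      _ = (‖v j‖ * Real.sqrt (a j)) * (‖v k‖ * Real.sqrt (a k)) := by ring
  have hsum : ∑ j, ∑ k, (‖v j‖ * Real.sqrt (a j)) *
      (‖v k‖ * Real.sqrt (a k))
      = (∑ j, ‖v j‖ * Real.sqrt (a j)) ^ 2 := by
    rw [sq, Finset.sum_mul_sum]
  have hcs2 : (∑ j, ‖v j‖ * Real.sqrt (a j)) ^ 2
      ≤ (∑ j, ‖v j‖ ^ 2) * (∑ j, Real.sqrt (a j) ^ 2) :=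
    Finset.sum_mul_sq_le_sq_mul_sq Finset.univ _ _
  have hnorm : ∑ j, ‖v j‖ ^ 2 = ‖v‖ ^ 2 := by
    rw [EuclideanSpace.norm_eq, Real.sq_sqrt (by positivity)]
  have hsa : ∑ j, Real.sqrt (a j) ^ 2 = ∑ j, a j :=
    Finset.sum_congr rfl fun j _ => Real.sq_sqrt (ha0 j)
  calc (⟪T v, v⟫).re ≤ _ := step
    _ = (∑ j, ‖v j‖ * Real.sqrt (a j)) ^ 2 := hsum
    _ ≤ (∑ j, ‖v j‖ ^ 2) * (∑ j, Real.sqrt (a j) ^ 2) := hcs2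
    _ = (∑ j, a j) * ‖v‖ ^ 2 := by rw [hnorm, hsa]; ring

/-- Cauchy–Schwarz on a probability measure. -/
lemma sq_integral_le {α : Type*} [MeasurableSpace α] (P : Measure α) [IsProbabilityMeasure P]
    {f : α → ℝ} (hf : MeasureTheory.MemLp f 2 P) :
    (∫ a, f a ∂P) ^ 2 ≤ ∫ a, (f a) ^ 2 ∂P := by
  have h := ProbabilityTheory.variance_nonneg f P
  rw [ProbabilityTheory.variance_eq_sub hf] at h
  simp only [Pi.pow_apply] at h
  linarith

lemma bdd_integrable {α : Type*} [MeasurableSpace α] {Q : Measure α} [IsFiniteMeasure Q]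
    {g : α → ℝ} {C : ℝ} (hg : AEStronglyMeasurable g Q) (hb : ∀ a, |g a| ≤ C) :
    Integrable g Q :=
  (integrable_const C).mono' hg (ae_of_all _ (by simpa [Real.norm_eq_abs] using hb))

/-- Measurability of the indicator extension. -/
lemma measurable_indicator_of_continuousOn {n : ℕ} {U : Set (EuclideanSpace ℂ (Fin n))}
    (hU : IsOpen U) {f : EuclideanSpace ℂ (Fin n) → ℝ} (hf : ContinuousOn f U) :
    Measurable (U.indicator f) := by
  classical
  have h := ContinuousOn.measurable_piecewise (g := fun _ => (0:ℝ)) hf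
    continuousOn_const hU.measurableSet
  rw [← Set.piecewise_eq_indicator]; exact h

/-- Haar substitution estimate. -/
lemma key_sub (n : ℕ) {K : Set (EuclideanSpace ℂ (Fin n))} (hKm : MeasurableSet K)
    {f : EuclideanSpace ℂ (Fin n) → ℝ} (hfi : Integrable f (lebC n)) (hf0 : ∀ z, 0 ≤ f z)
    (c : EuclideanSpace ℂ (Fin n)) {s : ℝ} (hs : 1/2 ≤ s) (hs1 : s ≤ 1) :
    ∫ y in K, f (c + s • y) ∂(lebC n) ≤ 2 ^ (2*n) * ∫ z, f z ∂(lebC n) := by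
  have hs0 : (0:ℝ) < s := lt_of_lt_of_le (by norm_num) hs
  have h1 : Integrable (fun w => f (c + w)) (lebC n) := hfi.comp_add_left c
  have hti : Integrable (fun y => f (c + s • y)) (lebC n) :=
    (integrable_comp_smul_iff (lebC n) (fun w => f (c + w)) (ne_of_gt hs0)).2 h1
  have h2 : ∫ y in K, f (c + s • y) ∂(lebC n) ≤ ∫ y, f (c + s • y) ∂(lebC n) :=
    setIntegral_le_integral hti (ae_of_all _ fun y => hf0 _)
  have h3 : ∫ y, f (c + s • y) ∂(lebC n)
      = |(s ^ (2*n))⁻¹| * ∫ z, f z ∂(lebC n) := by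
    have h := MeasureTheory.Measure.integral_comp_smul (lebC n) (fun w => f (c + w)) s
    rw [finrank_E] at h
    rw [h, integral_add_left_eq_self (μ := lebC n) f c]
    simp [smul_eq_mul]
  have h4 : |(s ^ (2*n))⁻¹| ≤ 2 ^ (2*n) := by
    rw [abs_of_pos (by positivity)]
    have hp : ((1:ℝ)/2) ^ (2*n) ≤ s ^ (2*n) := pow_le_pow_left₀ (by norm_num) hs _
    have h2n : ((2:ℝ)) ^ (2*n) = (((1:ℝ)/2) ^ (2*n))⁻¹ := by
      rw [one_div, inv_pow, inv_inv]
    rw [h2n]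
    exact inv_anti₀ (by positivity) hp
  calc ∫ y in K, f (c + s • y) ∂(lebC n) ≤ _ := h2
    _ = |(s ^ (2*n))⁻¹| * ∫ z, f z ∂(lebC n) := h3
    _ ≤ 2 ^ (2*n) * ∫ z, f z ∂(lebC n) :=
        mul_le_mul_of_nonneg_right h4 (integral_nonneg hf0)

end Aux

/-- The Demailly–Peternell–Schneider segment-length estimate: for a compact
convex `K ⊆ ℂⁿ` and a Kähler metric `g_k` (given by a continuous
positive-semidefinite Hermitian operator field `A`, with Kähler form `ω_k`) on a
neighborhood of `K`,
`∫_{K×K} length_{g_k}([x₁,x₂])² dμ dμ ≤ 2^{2n}·diam_{g₀}(K)²·Vol_{g₀}(K)·∫_K ω_k ∧ ω₀^{n−1}`,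
where `∫_K ω_k ∧ ω₀^{n-1} = (n−1)!·∫_K tr_{g₀}(g_k) dμ`. -/
theorem stmt18 (n : ℕ) (hn : 1 ≤ n)
    (K : Set (EuclideanSpace ℂ (Fin n))) (hK : IsCompact K) (hconv : Convex ℝ K)
    (U : Set (EuclideanSpace ℂ (Fin n))) (hU : IsOpen U) (hKU : K ⊆ U)
    (A : EuclideanSpace ℂ (Fin n) → EuclideanSpace ℂ (Fin n) →L[ℂ] EuclideanSpace ℂ (Fin n))
    (hAc : ContinuousOn A U)
    (hAherm : ∀ z ∈ U, ∀ v, ((inner ℂ (A z v) v : ℂ)).im = 0)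
    (hApos : ∀ z ∈ U, ∀ v, 0 ≤ ((inner ℂ (A z v) v : ℂ)).re) :
    (∫ x in K, ∫ y in K, (segLen n A x y) ^ 2 ∂(lebC n) ∂(lebC n)) ≤
      2 ^ (2 * n) * (diam K) ^ 2 * ((lebC n) K).toReal *
        ((n - 1).factorial * ∫ z in K, trH n A z ∂(lebC n)) := by
  classical
  set μ := lebC n with hμ
  set Pm := (volume : Measure ℝ).restrict (Ioc (0:ℝ) 1) with hPm
  haveI : IsFiniteMeasure (μ.restrict K) :=
    ⟨by rw [Measure.restrict_apply_univ]; exact hK.measure_lt_top⟩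
  haveI : IsProbabilityMeasure Pm :=
    ⟨by rw [hPm, Measure.restrict_apply_univ, Real.volume_Ioc]; norm_num⟩
  set φ := trH n A with hφ
  set D := diam K ^ 2 with hD
  have hD0 : 0 ≤ D := sq_nonneg _
  set F := K.indicator φ with hF
  -- continuity of herm and trH on U
  have hhermc : ∀ v, ContinuousOn (fun z => herm n A z v) U := by
    intro v
    have h1 : ContinuousOn (fun z => A z v) U := hAc.clm_apply continuousOn_const
    exact Complex.continuous_re.comp_continuousOn (h1.inner continuousOn_const)
  have hφc : ContinuousOn φ U := by
    rw [hφ]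
    have : trH n A = fun z => ∑ j, herm n A z (EuclideanSpace.single j (1:ℂ)) := rfl
    rw [this]
    exact continuousOn_finset_sum _ fun j _ => hhermc _
  have hφ0 : ∀ z ∈ U, 0 ≤ φ z := fun z hz => Finset.sum_nonneg fun j _ => hApos z hz _
  have hF0 : ∀ z, 0 ≤ F z := by
    intro z
    by_cases h : z ∈ K
    · rw [hF, Set.indicator_of_mem h]; exact hφ0 z (hKU h)
    · rw [hF, Set.indicator_of_notMem h]
  have hFKeq : ∀ z ∈ K, F z = φ z := fun z hz => Set.indicator_of_mem hz φ
  have hFm : Measurable F := by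
    have h1 : Measurable (U.indicator φ) := measurable_indicator_of_continuousOn hU hφc
    have h2 : F = K.indicator (U.indicator φ) := by
      funext z
      by_cases h : z ∈ K
      · rw [hF, Set.indicator_of_mem h, Set.indicator_of_mem h, Set.indicator_of_mem (hKU h)]
      · rw [hF, Set.indicator_of_notMem h, Set.indicator_of_notMem h]
    rw [h2]; exact h1.indicator hK.measurableSet
  have hFi : Integrable F μ := by
    have h : IntegrableOn φ K μ := (hφc.mono hKU).integrableOn_compact hK
    exact h.integrable_indicator hK.measurableSet
  obtain ⟨C0, hC0⟩ := hK.exists_bound_of_continuousOn (hφc.mono hKU)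
  set C := max C0 0 with hC
  have hCnn : 0 ≤ C := le_max_right _ _
  have hFb : ∀ z, |F z| ≤ C := by
    intro z
    by_cases h : z ∈ K
    · rw [hF, Set.indicator_of_mem h]
      calc |φ z| = ‖φ z‖ := (Real.norm_eq_abs _).symm
        _ ≤ C0 := hC0 z h
        _ ≤ C := le_max_left _ _
    · rw [hF, Set.indicator_of_notMem h]; simpa using hCnn
  set T := ∫ z, F z ∂μ with hT
  have hT0 : 0 ≤ T := integral_nonneg hF0
  have hTK : ∫ z in K, φ z ∂μ = T := by
    rw [hT, hF, integral_indicator hK.measurableSet]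
  -- the three-variable integrand
  set H : EuclideanSpace ℂ (Fin n) → EuclideanSpace ℂ (Fin n) → ℝ → ℝ :=
    fun x y t => F ((1 - t) • x + t • y) with hH
  have hHb : ∀ x y t, |H x y t| ≤ C := fun x y t => hFb _
  have hH0 : ∀ x y t, 0 ≤ H x y t := fun x y t => hF0 _
  -- measurability of the various uncurried versions
  have hm2 : ∀ x, Measurable (fun p : (EuclideanSpace ℂ (Fin n)) × ℝ => H x p.1 p.2) := by
    intro x
    have hc : Continuous (fun p : (EuclideanSpace ℂ (Fin n)) × ℝ => (1 - p.2) • x + p.2 • p.1) :=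
      ((continuous_const.sub continuous_snd).smul continuous_const).add
        (continuous_snd.smul continuous_fst)
    exact hFm.comp hc.measurable
  have hm3 : ∀ t : ℝ, Measurable (fun p : (EuclideanSpace ℂ (Fin n)) × (EuclideanSpace ℂ (Fin n))
      => H p.1 p.2 t) := by
    intro t
    have hc : Continuous (fun p : (EuclideanSpace ℂ (Fin n)) × (EuclideanSpace ℂ (Fin n)) =>
        (1 - t) • p.1 + t • p.2) :=
      (continuous_fst.const_smul (1 - t)).add (continuous_snd.const_smul t)
    exact hFm.comp hc.measurable
  have hm4 : Measurable (fun p : ((EuclideanSpace ℂ (Fin n)) × (EuclideanSpace ℂ (Fin n))) × ℝ =>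
      H p.1.1 p.1.2 p.2) := by
    have hc : Continuous (fun p : ((EuclideanSpace ℂ (Fin n)) × (EuclideanSpace ℂ (Fin n))) × ℝ =>
        (1 - p.2) • p.1.1 + p.2 • p.1.2) :=
      ((continuous_const.sub continuous_snd).smul (continuous_fst.comp continuous_fst)).add
        (continuous_snd.smul (continuous_snd.comp continuous_fst))
    exact hFm.comp hc.measurable
  have hm5 : Measurable (fun p : ((EuclideanSpace ℂ (Fin n)) × ℝ) × (EuclideanSpace ℂ (Fin n)) =>
      H p.1.1 p.2 p.1.2) := by
    have hc : Continuous (fun p : ((EuclideanSpace ℂ (Fin n)) × ℝ) × (EuclideanSpace ℂ (Fin n)) =>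
        (1 - p.1.2) • p.1.1 + p.1.2 • p.2) :=
      ((continuous_const.sub (continuous_snd.comp continuous_fst)).smul
        (continuous_fst.comp continuous_fst)).add
        ((continuous_snd.comp continuous_fst).smul continuous_snd)
    exact hFm.comp hc.measurable
  -- integrability on product measures
  have hI2 : ∀ x, Integrable (fun p : (EuclideanSpace ℂ (Fin n)) × ℝ => H x p.1 p.2)
      ((μ.restrict K).prod Pm) :=
    fun x => bdd_integrable (hm2 x).aestronglyMeasurable (fun p => hHb _ _ _)
  have hI3 : ∀ t : ℝ, Integrable
      (fun p : (EuclideanSpace ℂ (Fin n)) × (EuclideanSpace ℂ (Fin n)) => H p.1 p.2 t)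
      ((μ.restrict K).prod (μ.restrict K)) :=
    fun t => bdd_integrable (hm3 t).aestronglyMeasurable (fun p => hHb _ _ _)
  have hI4 : Integrable
      (fun p : ((EuclideanSpace ℂ (Fin n)) × (EuclideanSpace ℂ (Fin n))) × ℝ => H p.1.1 p.1.2 p.2)
      (((μ.restrict K).prod (μ.restrict K)).prod Pm) :=
    bdd_integrable hm4.aestronglyMeasurable (fun p => hHb _ _ _)
  have hI5 : Integrable
      (fun p : ((EuclideanSpace ℂ (Fin n)) × ℝ) × (EuclideanSpace ℂ (Fin n)) => H p.1.1 p.2 p.1.2)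
      (((μ.restrict K).prod Pm).prod (μ.restrict K)) :=
    bdd_integrable hm5.aestronglyMeasurable (fun p => hHb _ _ _)
  have hWint : Integrable
      (fun p : (EuclideanSpace ℂ (Fin n)) × (EuclideanSpace ℂ (Fin n)) => ∫ t, H p.1 p.2 t ∂Pm)
      ((μ.restrict K).prod (μ.restrict K)) := hI4.integral_prod_left
  have hXint : Integrable (fun x => ∫ y, (∫ t, H x y t ∂Pm) ∂(μ.restrict K)) (μ.restrict K) :=
    hWint.integral_prod_left
  have hGint : Integrable
      (fun p : (EuclideanSpace ℂ (Fin n)) × ℝ => ∫ y, H p.1 y p.2 ∂(μ.restrict K))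
      ((μ.restrict K).prod Pm) := hI5.integral_prod_left
  -- the per-t estimate
  have hGb : ∀ t ∈ Ioc (0:ℝ) 1,
      (∫ x in K, ∫ y in K, H x y t ∂μ ∂μ) ≤ (μ K).toReal * (2 ^ (2*n) * T) := by
    intro t ht
    rcases le_or_gt (1/2 : ℝ) t with h12 | h12
    · have hin : ∀ x, ∫ y in K, H x y t ∂μ ≤ 2 ^ (2*n) * T := by
        intro x
        exact key_sub n hK.measurableSet hFi hF0 ((1 - t) • x) h12 ht.2
      calc ∫ x in K, (∫ y in K, H x y t ∂μ) ∂μ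
          ≤ ∫ _x in K, (2 ^ (2*n) * T) ∂μ := by
            apply integral_mono_of_nonneg
            · exact ae_of_all _ fun x => integral_nonneg fun y => hH0 _ _ _
            · exact integrable_const _
            · exact ae_of_all _ hin
        _ = (μ K).toReal * (2 ^ (2*n) * T) := by
            rw [setIntegral_const, smul_eq_mul, measureReal_def]
    · have hsw : ∫ x in K, (∫ y in K, H x y t ∂μ) ∂μ = ∫ y in K, (∫ x in K, H x y t ∂μ) ∂μ :=
        integral_integral_swap (hI3 t)
      rw [hsw]
      have hin : ∀ y, ∫ x in K, H x y t ∂μ ≤ 2 ^ (2*n) * T := by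
        intro y
        have h2 : ∫ x in K, H x y t ∂μ = ∫ x in K, F (t • y + (1 - t) • x) ∂μ := by
          apply integral_congr_ae
          apply ae_of_all
          intro x
          simp only [hH]
          rw [add_comm]
        rw [h2]
        exact key_sub n hK.measurableSet hFi hF0 (t • y) (by linarith) (by linarith [ht.1])
      calc ∫ y in K, (∫ x in K, H x y t ∂μ) ∂μ
          ≤ ∫ _y in K, (2 ^ (2*n) * T) ∂μ := by
            apply integral_mono_of_nonneg
            · exact ae_of_all _ fun y => integral_nonneg fun x => hH0 _ _ _
            · exact integrable_const _
            · exact ae_of_all _ hin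
        _ = (μ K).toReal * (2 ^ (2*n) * T) := by
            rw [setIntegral_const, smul_eq_mul, measureReal_def]
  have hJ : (∫ t, (∫ x in K, ∫ y in K, H x y t ∂μ ∂μ) ∂Pm) ≤ (μ K).toReal * (2 ^ (2*n) * T) := by
    have hb : ∀ᵐ t ∂Pm, (∫ x in K, ∫ y in K, H x y t ∂μ ∂μ) ≤ (μ K).toReal * (2 ^ (2*n) * T) := by
      rw [hPm]
      exact (ae_restrict_iff' measurableSet_Ioc).2 (ae_of_all _ hGb)
    calc (∫ t, (∫ x in K, ∫ y in K, H x y t ∂μ ∂μ) ∂Pm)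
        ≤ ∫ _t, ((μ K).toReal * (2 ^ (2*n) * T)) ∂Pm := by
          apply integral_mono_of_nonneg
          · exact ae_of_all _ fun t => integral_nonneg fun x => integral_nonneg fun y => hH0 _ _ _
          · exact integrable_const _
          · exact hb
      _ = (μ K).toReal * (2 ^ (2*n) * T) := by simp
  have hswap1 : ∀ x, ∫ y in K, (∫ t, H x y t ∂Pm) ∂μ = ∫ t, (∫ y in K, H x y t ∂μ) ∂Pm :=
    fun x => integral_integral_swap (hI2 x)
  have hswap2 : ∫ x in K, (∫ t, (∫ y in K, H x y t ∂μ) ∂Pm) ∂μ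
      = ∫ t, (∫ x in K, (∫ y in K, H x y t ∂μ) ∂μ) ∂Pm :=
    integral_integral_swap hGint
  -- Claim A: pointwise comparison of the squared segment length
  have claimA : ∀ x ∈ K, ∀ y ∈ K, segLen n A x y ^ 2 ≤ D * ∫ t, H x y t ∂Pm := by
    intro x hx y hy
    have hγK : ∀ t ∈ Icc (0:ℝ) 1, (1 - t) • x + t • y ∈ K := fun t ht =>
      hconv hx hy (by linarith [ht.2]) ht.1 (by ring)
    have hγc : Continuous (fun t : ℝ => (1 - t) • x + t • y) :=
      ((continuous_const.sub continuous_id).smul continuous_const).add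
        (continuous_id.smul continuous_const)
    have hγU : ∀ t ∈ Icc (0:ℝ) 1, (1 - t) • x + t • y ∈ U := fun t ht => hKU (hγK t ht)
    have hφγ : ContinuousOn (fun t : ℝ => φ ((1 - t) • x + t • y)) (Icc (0:ℝ) 1) :=
      hφc.comp hγc.continuousOn hγU
    have hgc : ContinuousOn (fun t : ℝ => herm n A ((1 - t) • x + t • y) (y - x)) (Icc (0:ℝ) 1) :=
      (hhermc (y - x)).comp hγc.continuousOn hγU
    have hφγ0 : ∀ t ∈ Icc (0:ℝ) 1, 0 ≤ φ ((1 - t) • x + t • y) := fun t ht => hφ0 _ (hγU t ht)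
    have hdiam : ‖y - x‖ ≤ diam K := by
      rw [← dist_eq_norm]
      exact dist_le_diam_of_mem hK.isBounded hy hx
    have hpt : ∀ t ∈ Icc (0:ℝ) 1, Real.sqrt (herm n A ((1 - t) • x + t • y) (y - x))
        ≤ Real.sqrt (φ ((1 - t) • x + t • y)) * diam K := by
      intro t ht
      have hb : herm n A ((1 - t) • x + t • y) (y - x)
          ≤ φ ((1 - t) • x + t • y) * ‖y - x‖ ^ 2 :=
        herm_le_trace (A ((1 - t) • x + t • y)) (hApos _ (hγU t ht))
          (cs_psd (A _) (hAherm _ (hγU t ht)) (hApos _ (hγU t ht))) (y - x)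
      calc Real.sqrt (herm n A ((1 - t) • x + t • y) (y - x))
          ≤ Real.sqrt (φ ((1 - t) • x + t • y) * ‖y - x‖ ^ 2) := Real.sqrt_le_sqrt hb
        _ = Real.sqrt (φ ((1 - t) • x + t • y)) * ‖y - x‖ := by
            rw [Real.sqrt_mul (hφγ0 t ht), Real.sqrt_sq (norm_nonneg _)]
        _ ≤ Real.sqrt (φ ((1 - t) • x + t • y)) * diam K :=
            mul_le_mul_of_nonneg_left hdiam (Real.sqrt_nonneg _)
    have hint1 : IntervalIntegrable
        (fun t => Real.sqrt (herm n A ((1 - t) • x + t • y) (y - x))) volume 0 1 :=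
      ContinuousOn.intervalIntegrable_of_Icc zero_le_one
        hgc.sqrt
    have hint2 : IntervalIntegrable
        (fun t => Real.sqrt (φ ((1 - t) • x + t • y)) * diam K) volume 0 1 :=
      ContinuousOn.intervalIntegrable_of_Icc zero_le_one
        (hφγ.sqrt.mul continuousOn_const)
    have hseg : segLen n A x y ≤ ∫ t in (0:ℝ)..1, Real.sqrt (φ ((1 - t) • x + t • y)) * diam K := by
      rw [segLen]
      exact intervalIntegral.integral_mono_on zero_le_one hint1 hint2 hpt
    have hseg0 : 0 ≤ segLen n A x y := by
      rw [segLen]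
      exact intervalIntegral.integral_nonneg zero_le_one (fun t _ => Real.sqrt_nonneg _)
    have hfacm : ∫ t in (0:ℝ)..1, Real.sqrt (φ ((1 - t) • x + t • y)) * diam K
        = (∫ t in (0:ℝ)..1, Real.sqrt (φ ((1 - t) • x + t • y))) * diam K :=
      intervalIntegral.integral_mul_const _ _
    have hψm : MeasureTheory.MemLp (fun t => Real.sqrt (φ ((1 - t) • x + t • y))) 2 Pm := by
      apply MeasureTheory.MemLp.of_bound
        ((hφγ.sqrt.mono Ioc_subset_Icc_self).aestronglyMeasurable measurableSet_Ioc) (Real.sqrt C)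
      filter_upwards [ae_restrict_mem measurableSet_Ioc] with t ht
      have htI := Ioc_subset_Icc_self ht
      rw [Real.norm_eq_abs, abs_of_nonneg (Real.sqrt_nonneg _)]
      apply Real.sqrt_le_sqrt
      calc φ ((1 - t) • x + t • y) = F ((1 - t) • x + t • y) := (hFKeq _ (hγK t htI)).symm
        _ ≤ |F ((1 - t) • x + t • y)| := le_abs_self _
        _ ≤ C := hFb _
    have hψeq : ∫ t in (0:ℝ)..1, Real.sqrt (φ ((1 - t) • x + t • y))
        = ∫ t, Real.sqrt (φ ((1 - t) • x + t • y)) ∂Pm := by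
      rw [intervalIntegral.integral_of_le zero_le_one, hPm]
    have hcs1 : (∫ t, Real.sqrt (φ ((1 - t) • x + t • y)) ∂Pm) ^ 2
        ≤ ∫ t, (Real.sqrt (φ ((1 - t) • x + t • y))) ^ 2 ∂Pm := sq_integral_le Pm hψm
    have hsq2 : ∫ t, (Real.sqrt (φ ((1 - t) • x + t • y))) ^ 2 ∂Pm = ∫ t, H x y t ∂Pm := by
      rw [hPm]
      apply setIntegral_congr_fun measurableSet_Ioc
      intro t ht
      have htI := Ioc_subset_Icc_self ht
      show Real.sqrt (φ ((1 - t) • x + t • y)) ^ 2 = H x y t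
      rw [Real.sq_sqrt (hφγ0 t htI)]
      exact (hFKeq _ (hγK t htI)).symm
    calc segLen n A x y ^ 2
        ≤ (∫ t in (0:ℝ)..1, Real.sqrt (φ ((1 - t) • x + t • y)) * diam K) ^ 2 :=
          pow_le_pow_left₀ hseg0 hseg 2
      _ = D * (∫ t, Real.sqrt (φ ((1 - t) • x + t • y)) ∂Pm) ^ 2 := by
          rw [hfacm, hψeq, hD]; ring
      _ ≤ D * ∫ t, (Real.sqrt (φ ((1 - t) • x + t • y))) ^ 2 ∂Pm :=
          mul_le_mul_of_nonneg_left hcs1 hD0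
      _ = D * ∫ t, H x y t ∂Pm := by rw [hsq2]
  -- assembling
  have hPint : ∀ x, Integrable (fun y => D * ∫ t, H x y t ∂Pm) (μ.restrict K) :=
    fun x => ((hI2 x).integral_prod_left).const_mul D
  have hInner : ∀ x ∈ K, (∫ y in K, segLen n A x y ^ 2 ∂μ)
      ≤ ∫ y in K, (D * ∫ t, H x y t ∂Pm) ∂μ := by
    intro x hx
    apply integral_mono_of_nonneg (ae_of_all _ fun y => sq_nonneg _) (hPint x)
    exact (ae_restrict_iff' hK.measurableSet).2 (ae_of_all _ fun y hy => claimA x hx y hy)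
  have hOuterMaj : Integrable (fun x => ∫ y in K, (D * ∫ t, H x y t ∂Pm) ∂μ) (μ.restrict K) := by
    have he : (fun x => ∫ y in K, (D * ∫ t, H x y t ∂Pm) ∂μ)
        = fun x => D * ∫ y in K, (∫ t, H x y t ∂Pm) ∂μ := by
      funext x
      exact MeasureTheory.integral_const_mul D _
    rw [he]
    exact hXint.const_mul D
  have hmain : (∫ x in K, ∫ y in K, segLen n A x y ^ 2 ∂μ ∂μ)
      ≤ ∫ x in K, (∫ y in K, (D * ∫ t, H x y t ∂Pm) ∂μ) ∂μ := by
    apply integral_mono_of_nonneg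
      (ae_of_all _ fun x => integral_nonneg fun y => sq_nonneg _) hOuterMaj
    exact (ae_restrict_iff' hK.measurableSet).2 (ae_of_all _ hInner)
  have hcalc : ∫ x in K, (∫ y in K, (D * ∫ t, H x y t ∂Pm) ∂μ) ∂μ
      = D * ∫ x in K, (∫ y in K, (∫ t, H x y t ∂Pm) ∂μ) ∂μ := by
    calc ∫ x in K, (∫ y in K, (D * ∫ t, H x y t ∂Pm) ∂μ) ∂μ
        = ∫ x in K, (D * ∫ y in K, (∫ t, H x y t ∂Pm) ∂μ) ∂μ :=
          integral_congr_ae (ae_of_all _ fun x => MeasureTheory.integral_const_mul D _)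
      _ = D * ∫ x in K, (∫ y in K, (∫ t, H x y t ∂Pm) ∂μ) ∂μ :=
          MeasureTheory.integral_const_mul D _
  have hchain : ∫ x in K, (∫ y in K, (∫ t, H x y t ∂Pm) ∂μ) ∂μ
      ≤ (μ K).toReal * (2 ^ (2*n) * T) := by
    calc ∫ x in K, (∫ y in K, (∫ t, H x y t ∂Pm) ∂μ) ∂μ
        = ∫ x in K, (∫ t, (∫ y in K, H x y t ∂μ) ∂Pm) ∂μ :=
          integral_congr_ae (ae_of_all _ fun x => hswap1 x)
      _ = ∫ t, (∫ x in K, (∫ y in K, H x y t ∂μ) ∂μ) ∂Pm := hswap2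
      _ ≤ (μ K).toReal * (2 ^ (2*n) * T) := hJ
  have hfact : (1:ℝ) ≤ ((n-1).factorial : ℝ) := Nat.one_le_cast.mpr (n-1).factorial_pos
  have hμK0 : (0:ℝ) ≤ (μ K).toReal := ENNReal.toReal_nonneg
  calc (∫ x in K, ∫ y in K, segLen n A x y ^ 2 ∂μ ∂μ)
      ≤ ∫ x in K, (∫ y in K, (D * ∫ t, H x y t ∂Pm) ∂μ) ∂μ := hmain
    _ = D * ∫ x in K, (∫ y in K, (∫ t, H x y t ∂Pm) ∂μ) ∂μ := hcalc
    _ ≤ D * ((μ K).toReal * (2 ^ (2*n) * T)) := mul_le_mul_of_nonneg_left hchain hD0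
    _ = (2 ^ (2*n) * D * (μ K).toReal) * T := by ring
    _ ≤ (2 ^ (2*n) * D * (μ K).toReal) * (((n-1).factorial : ℝ) * T) := by
        apply mul_le_mul_of_nonneg_left (le_mul_of_one_le_left hT0 hfact) (by positivity)
    _ = 2 ^ (2 * n) * D * (μ K).toReal * (((n-1).factorial : ℝ) * ∫ z in K, φ z ∂μ) := by
        rw [hTK]


end
end
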